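/- arXiv:2402.15950 — 5 statements merged into one kernel-verified Lean document; each statement's English description precedes it below -/
import Mathlib

section
/- Let H be a Hilbert space and {e_n}_{n≥0} a sequence of unit vectors in H whose linear span is dense. Define the auxiliary sequence g₀ = e₀ and g_n = e_n − Σ_{k=0}^{n−1} ⟨e_n, e_k⟩ g_k. Then {e_n} is effective (i.e., for every f ∈ H, f = Σ_n ⟨f, g_n⟩ e_n in norm) if and only if {g_n} is a Parseval frame for H (i.e., Σ_n |⟨f, g_n⟩|² = ‖f‖² for all f ∈ H). -/
open MeasureTheory Filter

/-- For a complete sequence of unit vectors `{e_n}` in a Hilbert space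
with auxiliary (Kaczmarz) sequence `{g_n}`, effectiveness of `{e_n}` is equivalent to
`{g_n}` being a Parseval frame. (Inner products `⟨u,v⟩` below are linear in the first
argument, i.e. `inner v u` in Mathlib's convention.) -/
theorem stmt3 {H : Type*} [NormedAddCommGroup H] [InnerProductSpace ℂ H]
    [CompleteSpace H]
    (e : ℕ → H) (hunit : ∀ n, ‖e n‖ = 1)
    (hdense : Dense ((Submodule.span ℂ (Set.range e) : Submodule ℂ H) : Set H))
    (g : ℕ → H) (hg0 : g 0 = e 0)
    (hg : ∀ n, 0 < n →
      g n = e n - ∑ k ∈ Finset.range n, (inner ℂ (e k) (e n) : ℂ) • g k) :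
    (∀ f : H, Tendsto (fun N => ∑ k ∈ Finset.range N, (inner ℂ (g k) f : ℂ) • e k)
        atTop (nhds f))
      ↔ (∀ f : H, ∑' n, ‖(inner ℂ (g n) f : ℂ)‖ ^ 2 = ‖f‖ ^ 2) := by
  -- Claim A: the remainder pairs with `e N` the same way `f` pairs with `g N`.
  have claimA : ∀ f : H, ∀ N : ℕ,
      (inner ℂ (e N) (f - ∑ k ∈ Finset.range N, (inner ℂ (g k) f : ℂ) • e k) : ℂ)
        = inner ℂ (g N) f := by
    intro f N
    rcases Nat.eq_zero_or_pos N with h | h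
    · subst h; simp [hg0]
    · rw [hg N h, inner_sub_right, inner_sub_left, inner_sum, sum_inner]
      congr 1
      refine Finset.sum_congr rfl fun k hk => ?_
      rw [inner_smul_right, inner_smul_left, inner_conj_symm]
      ring
  -- Pythagoras step
  have pyth : ∀ (r eN : H), ‖eN‖ = 1 → ∀ c : ℂ, (inner ℂ eN r : ℂ) = c →
      ‖r - c • eN‖ ^ 2 = ‖r‖ ^ 2 - ‖c‖ ^ 2 := by
    intro r eN hu c hc
    have hre : (inner ℂ r (c • eN) : ℂ) = (‖c‖ : ℂ) ^ 2 := by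
      rw [inner_smul_right, ← inner_conj_symm, hc, Complex.mul_conj']
    have h1 := @norm_sub_sq ℂ H _ _ _ r (c • eN)
    rw [hre] at h1
    simp only [norm_smul, hu, mul_one] at h1
    rw [h1]
    have h2 : RCLike.re ((‖c‖ : ℂ) ^ 2) = ‖c‖ ^ 2 := by
      rw [← Complex.ofReal_pow]; exact Complex.ofReal_re _
    rw [h2]; ring
  -- Key identity
  have key : ∀ f : H, ∀ N : ℕ,
      ‖f - ∑ k ∈ Finset.range N, (inner ℂ (g k) f : ℂ) • e k‖ ^ 2
        = ‖f‖ ^ 2 - ∑ k ∈ Finset.range N, ‖(inner ℂ (g k) f : ℂ)‖ ^ 2 := by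
    intro f N
    induction N with
    | zero => simp
    | succ N ih =>
      rw [Finset.sum_range_succ, Finset.sum_range_succ]
      have h1 : f - (∑ k ∈ Finset.range N, (inner ℂ (g k) f : ℂ) • e k
            + (inner ℂ (g N) f : ℂ) • e N)
          = (f - ∑ k ∈ Finset.range N, (inner ℂ (g k) f : ℂ) • e k)
            - (inner ℂ (g N) f : ℂ) • e N := by abel
      rw [h1, pyth _ (e N) (hunit N) _ (claimA f N), ih]
      ring
  -- Now prove the equivalence pointwise in `f`.
  have main : ∀ f : H,
      Tendsto (fun N => ∑ k ∈ Finset.range N, (inner ℂ (g k) f : ℂ) • e k)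
        atTop (nhds f)
      ↔ (∑' n, ‖(inner ℂ (g n) f : ℂ)‖ ^ 2 = ‖f‖ ^ 2) := by
    intro f
    -- partial sums of the coefficient series
    set P : ℕ → ℝ := fun N => ∑ k ∈ Finset.range N, ‖(inner ℂ (g k) f : ℂ)‖ ^ 2
      with hP
    set S : ℕ → H := fun N => ∑ k ∈ Finset.range N, (inner ℂ (g k) f : ℂ) • e k
      with hS
    have hnn : ∀ n : ℕ, (0:ℝ) ≤ ‖(inner ℂ (g n) f : ℂ)‖ ^ 2 :=
      fun n => sq_nonneg _
    have hbd : ∀ N, P N ≤ ‖f‖ ^ 2 := by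
      intro N
      have := key f N
      nlinarith [sq_nonneg ‖f - S N‖, sq_nonneg (‖f - S N‖)]
    have hsum : Summable (fun n => ‖(inner ℂ (g n) f : ℂ)‖ ^ 2) :=
      summable_of_sum_range_le hnn hbd
    have htP : Tendsto P atTop (nhds (∑' n, ‖(inner ℂ (g n) f : ℂ)‖ ^ 2)) :=
      hsum.hasSum.tendsto_sum_nat
    constructor
    · intro ht
      -- ‖f - S N‖ → 0 hence ‖f - S N‖^2 → 0 hence P N → ‖f‖^2
      have h0 : Tendsto (fun N => ‖f - S N‖) atTop (nhds 0) := by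
        have := tendsto_iff_norm_sub_tendsto_zero.mp ht
        simpa [norm_sub_rev] using this
      have h0sq : Tendsto (fun N => ‖f - S N‖ ^ 2) atTop (nhds 0) := by
        have := h0.pow 2
        simpa using this
      have hPt : Tendsto P atTop (nhds (‖f‖ ^ 2)) := by
        have h2 : Tendsto (fun N => ‖f‖ ^ 2 - ‖f - S N‖ ^ 2) atTop
            (nhds (‖f‖ ^ 2 - 0)) := tendsto_const_nhds.sub h0sq
        simp only [sub_zero] at h2
        refine h2.congr fun N => ?_
        have := key f N
        linarith [this]
      exact tendsto_nhds_unique htP hPt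
    · intro ht
      rw [ht] at htP
      -- P N → ‖f‖^2, so ‖f - S N‖^2 → 0, so ‖f - S N‖ → 0
      have h0sq : Tendsto (fun N => ‖f - S N‖ ^ 2) atTop (nhds 0) := by
        have h2 : Tendsto (fun N => ‖f‖ ^ 2 - P N) atTop (nhds (‖f‖ ^ 2 - ‖f‖ ^ 2)) :=
          tendsto_const_nhds.sub htP
        simp only [sub_self] at h2
        refine h2.congr fun N => ?_
        have := key f N
        linarith [this]
      have h0 : Tendsto (fun N => ‖f - S N‖) atTop (nhds 0) := by
        have hsqrt : Tendsto (fun N => Real.sqrt (‖f - S N‖ ^ 2)) atTop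
            (nhds (Real.sqrt 0)) := (Real.continuous_sqrt.tendsto 0).comp h0sq
        simpa [Real.sqrt_sq (norm_nonneg _)] using hsqrt
      rw [tendsto_iff_norm_sub_tendsto_zero]
      simpa [norm_sub_rev] using h0
  exact forall_congr' main
end

section
/- Let μ be a Borel probability measure on [0,1)² with Rokhlin disintegration into marginal μ₁ and slice measures {γ^{x₁}}. Suppose {g_{n₁}} is a Parseval frame for L²(μ₁) and, for μ₁-almost every x₁, {g_{n₂}^{x₁}} is a Parseval frame for L²(γ^{x₁}) with (x₁, n₂) ↦ g_{n₂}^{x₁}(x₂) jointly measurable. Then the doubly indexed family {(x₁,x₂) ↦ g_{n₂}^{x₁}(x₂) g_{n₁}(x₁)} is a Parseval frame for L²(μ). -/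
open MeasureTheory ProbabilityTheory Set

section Helpers

lemma auxTsum {a : ℕ → ℝ} (ha : ∀ n, 0 ≤ a n) {r : ℝ} (h : ∑' n, a n = r)
    (hr : r = 0 → ∀ n, a n = 0) :
    ∑' n, ENNReal.ofReal (a n) = ENNReal.ofReal r := by
  by_cases hsum : Summable a
  · rw [← h, ENNReal.ofReal_tsum_of_nonneg ha hsum]
  · have h0 : r = 0 := by rw [← h, tsum_eq_zero_of_not_summable hsum]
    have := hr h0
    simp [this, h0]

variable {α : Type*} [MeasurableSpace α] {ν : Measure α} {f : α → ℂ}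

lemma auxMemL2 (hm : AEStronglyMeasurable f ν) :
    MemLp f 2 ν ↔ ∫⁻ x, ENNReal.ofReal (‖f x‖ ^ 2) ∂ν < ⊤ := by
  rw [memLp_two_iff_integrable_sq_norm hm]
  have haesm : AEStronglyMeasurable (fun x => ‖f x‖ ^ 2) ν :=
    (continuous_pow 2).comp_aestronglyMeasurable hm.norm
  constructor
  · intro hi
    have := hi.hasFiniteIntegral
    rwa [hasFiniteIntegral_iff_ofReal (Filter.Eventually.of_forall fun x => sq_nonneg _)] at this
  · intro hfin
    exact ⟨haesm, (hasFiniteIntegral_iff_ofReal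
      (Filter.Eventually.of_forall fun x => sq_nonneg _)).2 hfin⟩

lemma auxIntSq (hf : MemLp f 2 ν) : Integrable (fun x => ‖f x‖ ^ 2) ν :=
  (memLp_two_iff_integrable_sq_norm hf.1).1 hf

lemma auxOfRealInt (hf : MemLp f 2 ν) :
    ENNReal.ofReal (∫ x, ‖f x‖ ^ 2 ∂ν) = ∫⁻ x, ENNReal.ofReal (‖f x‖ ^ 2) ∂ν :=
  ofReal_integral_eq_lintegral_ofReal (auxIntSq hf)
    (Filter.Eventually.of_forall fun x => sq_nonneg _)

lemma auxZero (hf : MemLp f 2 ν) (h : ∫ x, ‖f x‖ ^ 2 ∂ν = 0) : f =ᵐ[ν] 0 := by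
  have h1 : (fun x => ‖f x‖ ^ 2) =ᵐ[ν] 0 :=
    (integral_eq_zero_iff_of_nonneg (fun x => sq_nonneg _) (auxIntSq hf)).1 h
  filter_upwards [h1] with x hx
  have : ‖f x‖ = 0 := by
    have := hx
    simp only [Pi.zero_apply] at this
    nlinarith [norm_nonneg (f x)]
  simpa using this

end Helpers

lemma frameBound {ν : Measure ℝ} [IsProbabilityMeasure ν] (E : ℕ → ℝ → ℂ)
    (hE : ∀ n, Measurable (E n))
    (hPF : ∀ f : ℝ → ℂ, MemLp f 2 ν →
      ∑' n : ℕ, ‖∫ y, f y * (starRingEnd ℂ) (E n y) ∂ν‖ ^ 2 = ∫ y, ‖f y‖ ^ 2 ∂ν)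
    (n : ℕ) : ∫⁻ y, ENNReal.ofReal (‖E n y‖ ^ 2) ∂ν ≤ 1 := by
  set f : ℕ → ℝ → ℂ := fun N y => if ‖E n y‖ ≤ (N : ℝ) then E n y else 0 with hf_def
  have hfmeas : ∀ N, Measurable (f N) := fun N =>
    Measurable.ite (measurableSet_le (hE n).norm measurable_const) (hE n) measurable_const
  have hfmem : ∀ N : ℕ, MemLp (f N) 2 ν := by
    intro N
    refine MemLp.of_bound (hfmeas N).aestronglyMeasurable (N : ℝ)
      (Filter.Eventually.of_forall fun y => ?_)
    simp only [hf_def]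
    split
    · assumption
    · simp
  have key : ∀ N : ℕ, ∫ y, ‖f N y‖ ^ 2 ∂ν ≤ 1 := by
    intro N
    set t := ∫ y, ‖f N y‖ ^ 2 ∂ν with ht_def
    have ht_nonneg : 0 ≤ t := integral_nonneg fun y => sq_nonneg _
    have hc : ∫ y, f N y * (starRingEnd ℂ) (E n y) ∂ν = (t : ℂ) := by
      have hpt : ∀ y, f N y * (starRingEnd ℂ) (E n y) = ((‖f N y‖ ^ 2 : ℝ) : ℂ) := by
        intro y
        simp only [hf_def]
        split
        · rw [Complex.mul_conj']
          norm_cast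
        · simp
      calc ∫ y, f N y * (starRingEnd ℂ) (E n y) ∂ν = ∫ y, ((‖f N y‖ ^ 2 : ℝ) : ℂ) ∂ν := by
            simp_rw [hpt]
        _ = ((∫ y, ‖f N y‖ ^ 2 ∂ν : ℝ) : ℂ) := integral_ofReal
    have hps : (∑' m : ℕ, ‖∫ y, f N y * (starRingEnd ℂ) (E m y) ∂ν‖ ^ 2) = t :=
      (hPF (f N) (hfmem N)).trans ht_def.symm
    by_cases hsum : Summable fun m : ℕ => ‖∫ y, f N y * (starRingEnd ℂ) (E m y) ∂ν‖ ^ 2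
    · have hterm : ‖∫ y, f N y * (starRingEnd ℂ) (E n y) ∂ν‖ ^ 2 ≤ t := by
        rw [← hps]
        exact Summable.le_tsum hsum n fun m _ => sq_nonneg _
      rw [hc] at hterm
      simp only [Complex.norm_real, Real.norm_eq_abs, abs_of_nonneg ht_nonneg] at hterm
      nlinarith
    · rw [tsum_eq_zero_of_not_summable hsum] at hps
      rw [← hps]
      exact zero_le_one
  have hφ : ∀ N : ℕ, (fun y => ENNReal.ofReal (‖f N y‖ ^ 2))
      = fun y => if ‖E n y‖ ≤ (N : ℝ) then ENNReal.ofReal (‖E n y‖ ^ 2) else 0 := by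
    intro N; funext y; simp only [hf_def]; split <;> simp
  have hbd : ∀ N : ℕ, ∫⁻ y, ENNReal.ofReal (‖f N y‖ ^ 2) ∂ν ≤ 1 := by
    intro N
    rw [← auxOfRealInt (hfmem N)]
    exact ENNReal.ofReal_le_one.2 (key N)
  have hmono : Monotone fun (N : ℕ) (y : ℝ) =>
      if ‖E n y‖ ≤ (N : ℝ) then ENNReal.ofReal (‖E n y‖ ^ 2) else 0 := by
    intro N M hNM y
    dsimp only
    split
    · rename_i h1
      rw [if_pos (h1.trans (by exact_mod_cast hNM))]
    · exact zero_le
  have hsup : ∀ y, (⨆ N : ℕ, if ‖E n y‖ ≤ (N : ℝ) then ENNReal.ofReal (‖E n y‖ ^ 2) else 0)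
      = ENNReal.ofReal (‖E n y‖ ^ 2) := by
    intro y
    refine le_antisymm (iSup_le fun N => ?_) ?_
    · split
      · exact le_rfl
      · exact zero_le
    · obtain ⟨N, hN⟩ := exists_nat_ge ‖E n y‖
      exact le_iSup_of_le N (by rw [if_pos hN])
  have hmeasφ : ∀ N : ℕ, Measurable fun y =>
      if ‖E n y‖ ≤ (N : ℝ) then ENNReal.ofReal (‖E n y‖ ^ 2) else 0 := by
    intro N
    exact Measurable.ite (measurableSet_le (hE n).norm measurable_const)
      (((hE n).norm.pow_const 2).ennreal_ofReal) measurable_const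
  calc ∫⁻ y, ENNReal.ofReal (‖E n y‖ ^ 2) ∂ν
      = ∫⁻ y, ⨆ N : ℕ, (if ‖E n y‖ ≤ (N : ℝ) then ENNReal.ofReal (‖E n y‖ ^ 2) else 0) ∂ν := by
        simp_rw [hsup]
    _ = ⨆ N : ℕ, ∫⁻ y, (if ‖E n y‖ ≤ (N : ℝ) then ENNReal.ofReal (‖E n y‖ ^ 2) else 0) ∂ν :=
        lintegral_iSup hmeasφ (fun N M h => fun y => hmono h y)
    _ ≤ 1 := by
        refine iSup_le fun N => ?_
        rw [← hφ N]
        exact hbd N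

lemma stepB (μ : Measure (ℝ × ℝ)) [IsProbabilityMeasure μ]
    (γ : ℝ → Measure ℝ) (hprob : ∀ x₁, IsProbabilityMeasure (γ x₁))
    (ν : Measure ℝ) (hν : ν = μ.fst)
    (hdis : ∀ f : ℝ × ℝ → ℂ, Integrable f μ →
      ∫ p, f p ∂μ = ∫ x₁, ∫ x₂, f (x₁, x₂) ∂(γ x₁) ∂ν) :
    ∀ᵐ x₁ ∂ν, γ x₁ = μ.condKernel x₁ := by
  subst hν
  have key : ∀ q : ℚ, ∀ᵐ x₁ ∂μ.fst, γ x₁ (Iic (q:ℝ)) = μ.condKernel x₁ (Iic (q:ℝ)) := by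
    intro q
    set s : Set ℝ := Iic (q:ℝ) with hs_def
    have hs : MeasurableSet s := measurableSet_Iic
    set ρ : ℝ → ℝ := fun x₁ => (γ x₁ s).toReal with hρ_def
    set ψ : ℝ → ℝ := fun x₁ => (μ.condKernel x₁ s).toReal with hψ_def
    have hψmeas : Measurable ψ := (Kernel.measurable_coe μ.condKernel hs).ennreal_toReal
    have hψint : Integrable ψ μ.fst := by
      refine Integrable.mono' (integrable_const 1) hψmeas.aestronglyMeasurable ?_
      refine Filter.Eventually.of_forall fun x => ?_
      simp only [Real.norm_eq_abs, abs_of_nonneg ENNReal.toReal_nonneg, hψ_def]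
      exact ENNReal.toReal_le_of_le_ofReal one_pos.le (by simpa using prob_le_one)
    have hρ_nonneg : ∀ x, 0 ≤ ρ x := fun x => ENNReal.toReal_nonneg
    have hρ_le_one : ∀ x, ρ x ≤ 1 := fun x => by
      have := hprob x
      exact ENNReal.toReal_le_of_le_ofReal one_pos.le (by simpa using prob_le_one)
    -- inner integral computation
    have hinner : ∀ x₁ : ℝ, ∫ x₂, ((1 : ℂ) + s.indicator (fun _ => (1:ℂ)) x₂) ∂(γ x₁)
        = 1 + (ρ x₁ : ℂ) := by
      intro x₁
      have := hprob x₁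
      rw [integral_add (integrable_const 1) ((integrable_const (1:ℂ)).indicator hs)]
      rw [integral_const, integral_indicator_const _ hs]
      simp [hρ_def, Measure.real]
    -- measurability of ρ from hdis applied to (1 + indicator ∘ snd)
    have hχ2int : Integrable (fun p : ℝ × ℝ => (1:ℂ) + (Prod.snd ⁻¹' s).indicator (fun _ => (1:ℂ)) p) μ :=
      (integrable_const 1).add ((integrable_const (1:ℂ)).indicator (measurable_snd hs))
    have heq1 := hdis _ hχ2int
    have hiter : (fun x₁ => ∫ x₂, ((1:ℂ) + (Prod.snd ⁻¹' s).indicator (fun _ => (1:ℂ)) (x₁, x₂)) ∂(γ x₁))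
        = fun x₁ => 1 + (ρ x₁ : ℂ) := by
      funext x₁
      rw [← hinner x₁]
      refine integral_congr_ae (Filter.Eventually.of_forall fun x₂ => ?_)
      beta_reduce
      congr 1
    rw [hiter] at heq1
    have hlhs : ∫ p : ℝ × ℝ, ((1:ℂ) + (Prod.snd ⁻¹' s).indicator (fun _ => (1:ℂ)) p) ∂μ
        = 1 + ((μ (Prod.snd ⁻¹' s)).toReal : ℂ) := by
      rw [integral_add (integrable_const 1) ((integrable_const (1:ℂ)).indicator (measurable_snd hs))]
      rw [integral_const, integral_indicator_const _ (measurable_snd hs)]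
      simp [Measure.real]
    have hΦint : Integrable (fun x₁ => 1 + (ρ x₁ : ℂ)) μ.fst := by
      by_contra hni
      rw [integral_undef hni, hlhs] at heq1
      have := congrArg Complex.re heq1
      simp at this
      nlinarith [ENNReal.toReal_nonneg (a := μ (Prod.snd ⁻¹' s))]
    have hρaesm : AEStronglyMeasurable ρ μ.fst := by
      have : AEStronglyMeasurable (fun x₁ => 1 + (ρ x₁ : ℂ)) μ.fst := hΦint.aestronglyMeasurable
      have h2 : AEStronglyMeasurable (fun x₁ => ((1:ℂ) + (ρ x₁ : ℂ)).re - 1) μ.fst :=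
        ((Complex.continuous_re.comp_aestronglyMeasurable this).sub aestronglyMeasurable_const)
      simpa using h2
    have hρint : Integrable ρ μ.fst := by
      refine Integrable.mono' (integrable_const 1) hρaesm ?_
      exact Filter.Eventually.of_forall fun x => by
        simp [Real.norm_eq_abs, abs_of_nonneg (hρ_nonneg x), hρ_le_one x]
    -- set integral equality
    have hseteq : ∀ A : Set ℝ, MeasurableSet A → ∫ x₁ in A, ρ x₁ ∂μ.fst = ∫ x₁ in A, ψ x₁ ∂μ.fst := by
      intro A hA
      have hfAint : Integrable ((A ×ˢ s).indicator (fun _ => (1:ℂ))) μ :=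
        (integrable_const (1:ℂ)).indicator (hA.prod hs)
      have heq2 := hdis _ hfAint
      have hlhs2 : ∫ p : ℝ × ℝ, (A ×ˢ s).indicator (fun _ => (1:ℂ)) p ∂μ
          = ((μ (A ×ˢ s)).toReal : ℂ) := by
        rw [integral_indicator_const _ (hA.prod hs)]; simp [Measure.real]
      have hiter2 : (fun x₁ => ∫ x₂, (A ×ˢ s).indicator (fun _ => (1:ℂ)) (x₁, x₂) ∂(γ x₁))
          = fun x₁ => Complex.ofReal (A.indicator ρ x₁) := by
        funext x₁
        by_cases hx : x₁ ∈ A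
        · have : (fun x₂ => (A ×ˢ s).indicator (fun _ => (1:ℂ)) (x₁, x₂))
              = fun x₂ => s.indicator (fun _ => (1:ℂ)) x₂ := by
            funext x₂; by_cases hy : x₂ ∈ s <;> simp [hx, hy]
          rw [this, integral_indicator_const _ hs]
          simp [hx, hρ_def, Measure.real]
        · have : (fun x₂ => (A ×ˢ s).indicator (fun _ => (1:ℂ)) (x₁, x₂)) = fun _ => (0:ℂ) := by
            funext x₂; simp [hx]
          rw [this, integral_zero]
          simp [hx]
      rw [hlhs2, hiter2] at heq2
      have hre : ∫ x₁, A.indicator ρ x₁ ∂μ.fst = (μ (A ×ˢ s)).toReal := by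
        have : ∫ x₁, Complex.ofReal (A.indicator ρ x₁) ∂μ.fst = Complex.ofReal (∫ x₁, A.indicator ρ x₁ ∂μ.fst) :=
          integral_ofReal
      -- combine
        rw [this] at heq2
        exact_mod_cast heq2.symm
      rw [← integral_indicator hA, hre]
      -- right side
      have hrhs : ∫ x₁ in A, ψ x₁ ∂μ.fst = (μ (A ×ˢ s)).toReal := by
        rw [← Measure.setLIntegral_condKernel_eq_measure_prod hA hs]
        rw [integral_toReal ((Kernel.measurable_coe μ.condKernel hs).aemeasurable) ?_]
        · exact Filter.Eventually.of_forall fun x => measure_lt_top _ _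
      rw [hrhs]
    have hae : ρ =ᵐ[μ.fst] ψ := by
      refine ae_eq_of_forall_setIntegral_eq_of_sigmaFinite
        (fun A hA _ => hρint.integrableOn) (fun A hA _ => hψint.integrableOn)
        (fun A hA _ => hseteq A hA)
    filter_upwards [hae] with x hx
    have := hprob x
    have h1 : γ x s ≠ ⊤ := measure_ne_top _ _
    have h2 : μ.condKernel x s ≠ ⊤ := measure_ne_top _ _
    exact (ENNReal.toReal_eq_toReal_iff' h1 h2).mp hx
  -- π-system induction
  have huniv : ∀ᵐ x ∂μ.fst, γ x univ = μ.condKernel x univ := by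
    refine Filter.Eventually.of_forall fun x => ?_
    have := hprob x
    simp
  suffices h : ∀ᵐ x ∂μ.fst, ∀ ⦃t⦄, MeasurableSet t → γ x t = μ.condKernel x t by
    filter_upwards [h] with x hx
    ext t ht; exact hx ht
  apply MeasurableSpace.ae_induction_on_inter Real.borel_eq_generateFrom_Iic_rat
    Real.isPiSystem_Iic_rat
  · simp
  · simp only [iUnion_singleton_eq_range, Set.mem_range, forall_exists_index,
      forall_apply_eq_imp_iff]
    exact ae_all_iff.2 fun q => key q
  · filter_upwards [huniv] with x hxuniv t ht heq
    rw [measure_compl ht (measure_ne_top _ _), heq, hxuniv,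
      measure_compl ht (measure_ne_top _ _)]
  · refine Filter.Eventually.of_forall fun x f hdisj hf heq => ?_
    rw [measure_iUnion hdisj hf, measure_iUnion hdisj hf]
    exact tsum_congr heq


/-- If `{g_{n₁}}` is a Parseval frame for `L²(μ₁)` and for `μ₁`-a.e. `x₁`
the family `{G_{n₂}^{x₁}}` is a Parseval frame for `L²(γ^{x₁})` (jointly measurable),
then `{(x₁,x₂) ↦ G_{n₂}^{x₁}(x₂) g_{n₁}(x₁)}` is a Parseval frame for `L²(μ)`,
where `μ` disintegrates as marginal `μ₁` with slices `γ^{x₁}`. -/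
theorem stmt5 (μ : Measure (ℝ × ℝ)) [IsProbabilityMeasure μ]
    (μ₁ : Measure ℝ) (hμ₁ : μ₁ = μ.map Prod.fst)
    (γ : ℝ → Measure ℝ) (hprob : ∀ x₁, IsProbabilityMeasure (γ x₁))
    (hdis : ∀ f : ℝ × ℝ → ℂ, Integrable f μ →
      ∫ p, f p ∂μ = ∫ x₁, ∫ x₂, f (x₁, x₂) ∂(γ x₁) ∂μ₁)
    (g : ℕ → ℝ → ℂ) (hgmeas : ∀ n₁, Measurable (g n₁))
    (hgL2 : ∀ n₁, MemLp (g n₁) 2 μ₁)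
    (hPF1 : ∀ f : ℝ → ℂ, MemLp f 2 μ₁ →
      ∑' n₁ : ℕ, ‖∫ x₁, f x₁ * (starRingEnd ℂ) (g n₁ x₁) ∂μ₁‖ ^ 2
        = ∫ x₁, ‖f x₁‖ ^ 2 ∂μ₁)
    (G : ℕ → ℝ → ℝ → ℂ) (hGmeas : ∀ n₂, Measurable (Function.uncurry (G n₂)))
    (hPF2 : ∀ᵐ x₁ ∂μ₁, ∀ f : ℝ → ℂ, MemLp f 2 (γ x₁) →
      ∑' n₂ : ℕ, ‖∫ x₂, f x₂ * (starRingEnd ℂ) (G n₂ x₁ x₂) ∂(γ x₁)‖ ^ 2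
        = ∫ x₂, ‖f x₂‖ ^ 2 ∂(γ x₁)) :
    ∀ f : ℝ × ℝ → ℂ, MemLp f 2 μ →
      ∑' q : ℕ × ℕ,
        ‖∫ p, f p * (starRingEnd ℂ) (G q.2 p.1 p.2 * g q.1 p.1) ∂μ‖ ^ 2
          = ∫ p, ‖f p‖ ^ 2 ∂μ := by
  intro f hf
  haveI : IsProbabilityMeasure μ₁ := by
    rw [hμ₁]; exact Measure.isProbabilityMeasure_map measurable_fst.aemeasurable
  have hfst : μ.fst = μ₁ := hμ₁.symm
  set κ := μ.condKernel with hκ_def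
  have hcomp' : μ₁ ⊗ₘ κ = μ := by rw [← hfst]; exact Measure.IsCondKernel.disintegrate
  have hγκ : ∀ᵐ x₁ ∂μ₁, γ x₁ = κ x₁ := stepB μ γ hprob μ₁ hfst.symm hdis
  -- measurable representative
  obtain ⟨f', hf'sm, hff'⟩ : ∃ f', StronglyMeasurable f' ∧ f =ᵐ[μ] f' :=
    ⟨hf.1.mk f, hf.1.stronglyMeasurable_mk, hf.1.ae_eq_mk⟩
  have hf' : MemLp f' 2 μ := hf.ae_eq hff'
  have hred1 : ∀ q : ℕ × ℕ,
      ∫ p, f p * (starRingEnd ℂ) (G q.2 p.1 p.2 * g q.1 p.1) ∂μ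
        = ∫ p, f' p * (starRingEnd ℂ) (G q.2 p.1 p.2 * g q.1 p.1) ∂μ := fun q =>
    integral_congr_ae (by filter_upwards [hff'] with p hp; rw [hp])
  have hred2 : ∫ p, ‖f p‖ ^ 2 ∂μ = ∫ p, ‖f' p‖ ^ 2 ∂μ :=
    integral_congr_ae (by filter_upwards [hff'] with p hp; rw [hp])
  have hredt : (∑' q : ℕ × ℕ, ‖∫ p, f p * (starRingEnd ℂ) (G q.2 p.1 p.2 * g q.1 p.1) ∂μ‖ ^ 2)
      = ∑' q : ℕ × ℕ, ‖∫ p, f' p * (starRingEnd ℂ) (G q.2 p.1 p.2 * g q.1 p.1) ∂μ‖ ^ 2 :=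
    tsum_congr fun q => by rw [hred1 q]
  rw [hredt, hred2]
  clear hredt hred2 hred1 hff' hf
  -- slice measurability of G
  have hGsl : ∀ (n₂ : ℕ) (x₁ : ℝ), Measurable (fun x₂ => G n₂ x₁ x₂) := fun n₂ x₁ =>
    (hGmeas n₂).comp measurable_prodMk_left
  have hPF2κ : ∀ᵐ x₁ ∂μ₁, ∀ h : ℝ → ℂ, MemLp h 2 (κ x₁) →
      ∑' n₂ : ℕ, ‖∫ x₂, h x₂ * (starRingEnd ℂ) (G n₂ x₁ x₂) ∂(κ x₁)‖ ^ 2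
        = ∫ x₂, ‖h x₂‖ ^ 2 ∂(κ x₁) := by
    filter_upwards [hPF2, hγκ] with x₁ h1 h2
    rw [← h2]; exact h1
  have hGbd : ∀ᵐ x₁ ∂μ₁, ∀ n₂ : ℕ,
      ∫⁻ x₂, ENNReal.ofReal (‖G n₂ x₁ x₂‖ ^ 2) ∂(κ x₁) ≤ 1 := by
    filter_upwards [hPF2κ] with x₁ h1
    exact fun n₂ => frameBound (fun n => G n x₁) (fun n => hGsl n x₁) h1 n₂
  have hf'meas : Measurable f' := hf'sm.measurable
  have hsqmeas : Measurable (fun p : ℝ × ℝ => ENNReal.ofReal (‖f' p‖ ^ 2)) :=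
    (hf'meas.norm.pow_const 2).ennreal_ofReal
  have hRfin : ∫⁻ p, ENNReal.ofReal (‖f' p‖ ^ 2) ∂μ < ⊤ := (auxMemL2 hf'.1).1 hf'
  have hsplit : ∫⁻ p, ENNReal.ofReal (‖f' p‖ ^ 2) ∂μ
      = ∫⁻ x₁, ∫⁻ x₂, ENNReal.ofReal (‖f' (x₁, x₂)‖ ^ 2) ∂(κ x₁) ∂μ₁ := by
    rw [← hcomp']
    exact Measure.lintegral_compProd hsqmeas
  have hinmeas : Measurable (fun x₁ => ∫⁻ x₂, ENNReal.ofReal (‖f' (x₁, x₂)‖ ^ 2) ∂(κ x₁)) :=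
    Measurable.lintegral_kernel_prod_right' hsqmeas
  have hslfin : ∀ᵐ x₁ ∂μ₁, ∫⁻ x₂, ENNReal.ofReal (‖f' (x₁, x₂)‖ ^ 2) ∂(κ x₁) < ⊤ := by
    refine ae_lt_top hinmeas ?_
    rw [← hsplit]; exact hRfin.ne
  have hsliceL2 : ∀ᵐ x₁ ∂μ₁, MemLp (fun x₂ => f' (x₁, x₂)) 2 (κ x₁) := by
    filter_upwards [hslfin] with x₁ hx
    exact (auxMemL2 ((hf'sm.comp_measurable measurable_prodMk_left).aestronglyMeasurable)).2 hx
  set F : ℕ → ℝ → ℂ :=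
    fun n₂ x₁ => ∫ x₂, f' (x₁, x₂) * (starRingEnd ℂ) (G n₂ x₁ x₂) ∂(κ x₁) with hF_def
  have hFsm : ∀ n₂, StronglyMeasurable (F n₂) := by
    intro n₂
    have hsm : StronglyMeasurable fun p : ℝ × ℝ => f' p * (starRingEnd ℂ) (G n₂ p.1 p.2) :=
      hf'sm.mul (Measurable.stronglyMeasurable (continuous_star.measurable.comp (hGmeas n₂)))
    exact hsm.integral_kernel_prod_right'
  set V : ℝ → ℝ := fun x₁ => ∫ x₂, ‖f' (x₁, x₂)‖ ^ 2 ∂(κ x₁) with hV_def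
  have hVae : ∀ᵐ x₁ ∂μ₁, ENNReal.ofReal (V x₁)
      = ∫⁻ x₂, ENNReal.ofReal (‖f' (x₁, x₂)‖ ^ 2) ∂(κ x₁) := by
    filter_upwards [hsliceL2] with x₁ hx
    exact auxOfRealInt hx
  have hkey : ∀ᵐ x₁ ∂μ₁,
      (∑' n₂ : ℕ, ENNReal.ofReal (‖F n₂ x₁‖ ^ 2)) = ENNReal.ofReal (V x₁) := by
    filter_upwards [hPF2κ, hsliceL2] with x₁ h1 h2
    refine auxTsum (fun n₂ => sq_nonneg _) (h1 _ h2) ?_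
    intro h0 n₂
    have hz : (fun x₂ => f' (x₁, x₂)) =ᵐ[κ x₁] 0 := auxZero h2 h0
    have hz2 : F n₂ x₁ = 0 := by
      have : F n₂ x₁ = ∫ x₂, (0 : ℂ) ∂(κ x₁) :=
        integral_congr_ae (by filter_upwards [hz] with y hy; rw [show f' (x₁, y) = 0 from hy]; simp)
      simpa using this
    simp [hz2]
  have hFbd : ∀ n₂ : ℕ, ∀ᵐ x₁ ∂μ₁, ENNReal.ofReal (‖F n₂ x₁‖ ^ 2)
      ≤ ∫⁻ x₂, ENNReal.ofReal (‖f' (x₁, x₂)‖ ^ 2) ∂(κ x₁) := by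
    intro n₂
    filter_upwards [hkey, hVae] with x₁ h1 h2
    calc ENNReal.ofReal (‖F n₂ x₁‖ ^ 2)
        ≤ ∑' m : ℕ, ENNReal.ofReal (‖F m x₁‖ ^ 2) := ENNReal.le_tsum n₂
      _ = ENNReal.ofReal (V x₁) := h1
      _ = _ := h2
  have hFmem : ∀ n₂ : ℕ, MemLp (F n₂) 2 μ₁ := by
    intro n₂
    refine (auxMemL2 (hFsm n₂).aestronglyMeasurable).2 ?_
    calc ∫⁻ x₁, ENNReal.ofReal (‖F n₂ x₁‖ ^ 2) ∂μ₁
        ≤ ∫⁻ x₁, ∫⁻ x₂, ENNReal.ofReal (‖f' (x₁, x₂)‖ ^ 2) ∂(κ x₁) ∂μ₁ :=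
          lintegral_mono_ae (hFbd n₂)
      _ = ∫⁻ p, ENNReal.ofReal (‖f' p‖ ^ 2) ∂μ := hsplit.symm
      _ < ⊤ := hRfin
  have hc_eq : ∀ n₁ n₂ : ℕ,
      ∫ p, f' p * (starRingEnd ℂ) (G n₂ p.1 p.2 * g n₁ p.1) ∂μ
        = ∫ x₁, F n₂ x₁ * (starRingEnd ℂ) (g n₁ x₁) ∂μ₁ := by
    intro n₁ n₂
    set w : ℝ × ℝ → ℂ := fun p => (starRingEnd ℂ) (G n₂ p.1 p.2 * g n₁ p.1) with hw_def
    have hwmeas : Measurable w := continuous_star.measurable.comp ((hGmeas n₂).mul ((hgmeas n₁).comp measurable_fst))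
    have hwL2 : MemLp w 2 μ := by
      refine (auxMemL2 hwmeas.aestronglyMeasurable).2 ?_
      have hpt : ∀ p : ℝ × ℝ, ENNReal.ofReal (‖w p‖ ^ 2)
          = ENNReal.ofReal (‖G n₂ p.1 p.2‖ ^ 2) * ENNReal.ofReal (‖g n₁ p.1‖ ^ 2) := by
        intro p
        rw [← ENNReal.ofReal_mul (sq_nonneg _)]
        congr 1
        simp [hw_def, mul_pow, norm_mul]
      calc ∫⁻ p, ENNReal.ofReal (‖w p‖ ^ 2) ∂μ
          = ∫⁻ p : ℝ × ℝ,
              ENNReal.ofReal (‖G n₂ p.1 p.2‖ ^ 2) * ENNReal.ofReal (‖g n₁ p.1‖ ^ 2) ∂μ := by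
            simp_rw [hpt]
        _ = ∫⁻ x₁, ∫⁻ x₂,
              ENNReal.ofReal (‖G n₂ x₁ x₂‖ ^ 2) * ENNReal.ofReal (‖g n₁ x₁‖ ^ 2) ∂(κ x₁) ∂μ₁ := by
            rw [← hcomp']
            exact Measure.lintegral_compProd
              ((((hGmeas n₂).norm.pow_const 2).ennreal_ofReal).mul
                ((((hgmeas n₁).comp measurable_fst).norm.pow_const 2).ennreal_ofReal))
        _ = ∫⁻ x₁, (∫⁻ x₂, ENNReal.ofReal (‖G n₂ x₁ x₂‖ ^ 2) ∂(κ x₁))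
              * ENNReal.ofReal (‖g n₁ x₁‖ ^ 2) ∂μ₁ := by
            refine lintegral_congr fun x₁ => ?_
            rw [lintegral_mul_const _ (((hGsl n₂ x₁).norm.pow_const 2).ennreal_ofReal)]
        _ ≤ ∫⁻ x₁, 1 * ENNReal.ofReal (‖g n₁ x₁‖ ^ 2) ∂μ₁ := by
            refine lintegral_mono_ae ?_
            filter_upwards [hGbd] with x₁ hx
            exact mul_le_mul_left (hx n₂) _
        _ = ∫⁻ x₁, ENNReal.ofReal (‖g n₁ x₁‖ ^ 2) ∂μ₁ := by simp
        _ < ⊤ := (auxMemL2 (hgmeas n₁).aestronglyMeasurable).1 (hgL2 n₁)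
    have hint : Integrable (fun p => f' p * w p) μ := by
      have hsmul : MemLp (w • f') 1 μ := hf'.smul hwL2 (hpqr := ⟨by simp [ENNReal.inv_two_add_inv_two]⟩)
      have hi : Integrable (w • f') μ := memLp_one_iff_integrable.1 hsmul
      refine hi.congr (Filter.Eventually.of_forall fun p => ?_)
      simp only [Pi.smul_apply', Pi.smul_apply, smul_eq_mul]
      ring
    calc ∫ p, f' p * (starRingEnd ℂ) (G n₂ p.1 p.2 * g n₁ p.1) ∂μ
        = ∫ p, f' p * w p ∂μ := rfl
      _ = ∫ x₁, ∫ x₂, f' (x₁, x₂) * w (x₁, x₂) ∂(κ x₁) ∂μ₁ := by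
          rw [← hcomp'] at hint ⊢
          exact Measure.integral_compProd hint
      _ = ∫ x₁, F n₂ x₁ * (starRingEnd ℂ) (g n₁ x₁) ∂μ₁ := by
          refine integral_congr_ae (Filter.Eventually.of_forall fun x₁ => ?_)
          have hpt2 : ∀ x₂, f' (x₁, x₂) * w (x₁, x₂)
              = (f' (x₁, x₂) * (starRingEnd ℂ) (G n₂ x₁ x₂)) * (starRingEnd ℂ) (g n₁ x₁) := by
            intro x₂; simp only [hw_def, map_mul]; ring
          simp_rw [hpt2]
          rw [integral_mul_const]
  have hsum1 : ∀ n₂ : ℕ,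
      (∑' n₁ : ℕ,
        ENNReal.ofReal (‖∫ p, f' p * (starRingEnd ℂ) (G n₂ p.1 p.2 * g n₁ p.1) ∂μ‖ ^ 2))
        = ENNReal.ofReal (∫ x₁, ‖F n₂ x₁‖ ^ 2 ∂μ₁) := by
    intro n₂
    have hpar := hPF1 (F n₂) (hFmem n₂)
    have hrw : (fun n₁ : ℕ =>
        ENNReal.ofReal (‖∫ p, f' p * (starRingEnd ℂ) (G n₂ p.1 p.2 * g n₁ p.1) ∂μ‖ ^ 2))
        = fun n₁ => ENNReal.ofReal (‖∫ x₁, F n₂ x₁ * (starRingEnd ℂ) (g n₁ x₁) ∂μ₁‖ ^ 2) := by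
      funext n₁; rw [hc_eq n₁ n₂]
    rw [hrw]
    refine auxTsum (fun n₁ => sq_nonneg _) hpar ?_
    intro h0 n₁
    have hz := auxZero (hFmem n₂) h0
    have hz2 : ∫ x₁, F n₂ x₁ * (starRingEnd ℂ) (g n₁ x₁) ∂μ₁ = 0 := by
      have : ∫ x₁, F n₂ x₁ * (starRingEnd ℂ) (g n₁ x₁) ∂μ₁ = ∫ x₁, (0 : ℂ) ∂μ₁ :=
        integral_congr_ae (by
          filter_upwards [hz] with x hx
          rw [show F n₂ x = 0 from hx]; simp)
      simpa using this
    simp [hz2]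
  have hT : (∑' q : ℕ × ℕ,
      ENNReal.ofReal (‖∫ p, f' p * (starRingEnd ℂ) (G q.2 p.1 p.2 * g q.1 p.1) ∂μ‖ ^ 2))
      = ENNReal.ofReal (∫ p, ‖f' p‖ ^ 2 ∂μ) := by
    calc ∑' q : ℕ × ℕ,
        ENNReal.ofReal (‖∫ p, f' p * (starRingEnd ℂ) (G q.2 p.1 p.2 * g q.1 p.1) ∂μ‖ ^ 2)
        = ∑' (n₁ : ℕ) (n₂ : ℕ),
            ENNReal.ofReal (‖∫ p, f' p * (starRingEnd ℂ) (G n₂ p.1 p.2 * g n₁ p.1) ∂μ‖ ^ 2) :=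
          ENNReal.tsum_prod'
      _ = ∑' (n₂ : ℕ) (n₁ : ℕ),
            ENNReal.ofReal (‖∫ p, f' p * (starRingEnd ℂ) (G n₂ p.1 p.2 * g n₁ p.1) ∂μ‖ ^ 2) :=
          ENNReal.tsum_comm
      _ = ∑' n₂ : ℕ, ENNReal.ofReal (∫ x₁, ‖F n₂ x₁‖ ^ 2 ∂μ₁) := tsum_congr fun n₂ => hsum1 n₂
      _ = ∑' n₂ : ℕ, ∫⁻ x₁, ENNReal.ofReal (‖F n₂ x₁‖ ^ 2) ∂μ₁ :=
          tsum_congr fun n₂ => auxOfRealInt (hFmem n₂)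
      _ = ∫⁻ x₁, ∑' n₂ : ℕ, ENNReal.ofReal (‖F n₂ x₁‖ ^ 2) ∂μ₁ :=
          (lintegral_tsum fun n₂ =>
            (((hFsm n₂).measurable.norm.pow_const 2).ennreal_ofReal).aemeasurable).symm
      _ = ∫⁻ x₁, ENNReal.ofReal (V x₁) ∂μ₁ := lintegral_congr_ae hkey
      _ = ∫⁻ x₁, ∫⁻ x₂, ENNReal.ofReal (‖f' (x₁, x₂)‖ ^ 2) ∂(κ x₁) ∂μ₁ :=
          lintegral_congr_ae hVae
      _ = ∫⁻ p, ENNReal.ofReal (‖f' p‖ ^ 2) ∂μ := hsplit.symm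
      _ = ENNReal.ofReal (∫ p, ‖f' p‖ ^ 2 ∂μ) := (auxOfRealInt hf').symm
  calc ∑' q : ℕ × ℕ, ‖∫ p, f' p * (starRingEnd ℂ) (G q.2 p.1 p.2 * g q.1 p.1) ∂μ‖ ^ 2
      = ∑' q : ℕ × ℕ,
          (ENNReal.ofReal (‖∫ p, f' p * (starRingEnd ℂ) (G q.2 p.1 p.2 * g q.1 p.1) ∂μ‖ ^ 2)).toReal := by
        refine tsum_congr fun q => ?_
        rw [ENNReal.toReal_ofReal (sq_nonneg _)]
    _ = (∑' q : ℕ × ℕ,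
          ENNReal.ofReal (‖∫ p, f' p * (starRingEnd ℂ) (G q.2 p.1 p.2 * g q.1 p.1) ∂μ‖ ^ 2)).toReal :=
        (ENNReal.tsum_toReal_eq fun q => ENNReal.ofReal_ne_top).symm
    _ = ∫ p, ‖f' p‖ ^ 2 ∂μ := by
        rw [hT, ENNReal.toReal_ofReal (integral_nonneg fun p => sq_nonneg _)]
end

section
/- Let μ be a singular Borel probability measure on [0,1) with Normalized Cauchy Transform V_μ(f) = C_μ(f)/C_μ(1). Then for every f ∈ L²(μ) and w in the open unit disk, ([V_μ(f)](w) − [V_μ(f)](0))/w = [V_μ(e^{−2πix}(f − ⟨f, 1⟩_{L²(μ)}))](w). -/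
open MeasureTheory

/-- The Normalized Cauchy Transform `V_μ(f) = C_μ(f)/C_μ(1)`. -/
noncomputable def NCT (μ : Measure ℝ) (f : ℝ → ℂ) (w : ℂ) : ℂ :=
  (∫ x, f x / (1 - w * Complex.exp (-(2 * Real.pi * Complex.I * x))) ∂μ)
    / (∫ x, 1 / (1 - w * Complex.exp (-(2 * Real.pi * Complex.I * x))) ∂μ)

/-- For a singular Borel probability measure `μ` on `[0,1)` and
`f ∈ L²(μ)`, `([V_μ f](w) - [V_μ f](0))/w = [V_μ(e^{-2πix}(f - ⟨f,1⟩))](w)` on the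
open unit disk. -/
theorem stmt9 (μ : Measure ℝ) [IsProbabilityMeasure μ]
    (hsing : μ ⟂ₘ (volume : Measure ℝ))
    (hsupp : μ (Set.Ico (0 : ℝ) 1)ᶜ = 0)
    (f : ℝ → ℂ) (hf : MemLp f 2 μ) :
    ∀ w ∈ Metric.ball (0 : ℂ) 1, w ≠ 0 →
      (NCT μ f w - NCT μ f 0) / w
        = NCT μ (fun x => Complex.exp (-(2 * Real.pi * Complex.I * x))
            * (f x - ∫ y, f y ∂μ)) w := by
  intro w hw hw0
  have hw1 : ‖w‖ < 1 := by simpa [Metric.mem_ball, dist_zero_right] using hw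
  set e : ℝ → ℂ := fun x => Complex.exp (-(2 * Real.pi * Complex.I * x)) with he
  have hnorm : ∀ x : ℝ, ‖e x‖ = 1 := by
    intro x
    simp only [he, Complex.norm_exp]
    have : (-(2 * (Real.pi : ℂ) * Complex.I * (x : ℂ))).re = 0 := by
      simp [Complex.mul_re, Complex.mul_im]
    rw [this, Real.exp_zero]
  have hlow : ∀ x : ℝ, 1 - ‖w‖ ≤ ‖1 - w * e x‖ := by
    intro x
    have h1 : ‖(1 : ℂ)‖ - ‖w * e x‖ ≤ ‖1 - w * e x‖ := norm_sub_norm_le _ _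
    simpa [norm_mul, hnorm x] using h1
  have hwpos : 0 < 1 - ‖w‖ := by linarith
  have hden_ne : ∀ x : ℝ, 1 - w * e x ≠ 0 := by
    intro x h
    have := hlow x
    rw [h, norm_zero] at this
    linarith
  set g : ℝ → ℂ := fun x => (1 - w * e x)⁻¹ with hg
  have hgbound : ∀ x : ℝ, ‖g x‖ ≤ (1 - ‖w‖)⁻¹ := by
    intro x
    rw [hg]
    simp only [norm_inv]
    exact inv_anti₀ hwpos (hlow x)
  have hecont : Continuous e := by
    apply Complex.continuous_exp.comp
    fun_prop
  have hgcont : Continuous g := by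
    apply Continuous.inv₀
    · fun_prop
    · exact hden_ne
  have hgint : Integrable g μ := by
    refine Integrable.mono' (integrable_const ((1 - ‖w‖)⁻¹)) hgcont.aestronglyMeasurable ?_
    exact Filter.Eventually.of_forall hgbound
  have hf1 : Integrable f μ := hf.integrable one_le_two
  set m : ℂ := ∫ y, f y ∂μ with hm
  have hmul : ∀ (h : ℝ → ℂ), Integrable h μ → Integrable (fun x => h x * g x) μ := by
    intro h hh
    have := Integrable.bdd_mul hh hgcont.aestronglyMeasurable (c := (1 - ‖w‖)⁻¹) (Filter.Eventually.of_forall hgbound)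
    exact this.congr (Filter.Eventually.of_forall fun x => mul_comm _ _)
  have hfm : Integrable (fun x => f x - m) μ := hf1.sub (integrable_const m)
  have hefm : Integrable (fun x => e x * (f x - m)) μ :=
    Integrable.bdd_mul hfm hecont.aestronglyMeasurable (c := 1) (Filter.Eventually.of_forall fun x => le_of_eq (hnorm x))
  have hfg : Integrable (fun x => f x * g x) μ := hmul f hf1
  have hefmg : Integrable (fun x => e x * (f x - m) * g x) μ := hmul _ hefm
  have hpt : ∀ x : ℝ, (f x - m) * g x = (f x - m) + w * (e x * (f x - m) * g x) := by
    intro x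
    have h0 := hden_ne x
    have hge : g x * (1 - w * e x) = 1 := inv_mul_cancel₀ h0
    linear_combination (f x - m) * hge
  have hint_fm : ∫ x, (f x - m) ∂μ = 0 := by
    rw [integral_sub hf1 (integrable_const m), integral_const]
    simp [hm]
  have hkey : ∫ x, (f x - m) * g x ∂μ = w * ∫ x, e x * (f x - m) * g x ∂μ := by
    calc ∫ x, (f x - m) * g x ∂μ
        = ∫ x, ((f x - m) + w * (e x * (f x - m) * g x)) ∂μ :=
          integral_congr_ae (Filter.Eventually.of_forall hpt)
      _ = (∫ x, (f x - m) ∂μ) + ∫ x, w * (e x * (f x - m) * g x) ∂μ :=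
          integral_add hfm (hefmg.const_mul w)
      _ = w * ∫ x, e x * (f x - m) * g x ∂μ := by
          rw [hint_fm, integral_const_mul, zero_add]
  -- B ≠ 0
  have hB_ne : (∫ x, g x ∂μ) ≠ 0 := by
    set c : ℝ := (1 - ‖w‖) / (1 + ‖w‖) ^ 2 with hc
    have hcpos : 0 < c := div_pos hwpos (by positivity)
    have hre : ∀ x : ℝ, c ≤ (g x).re := by
      intro x
      rw [hg]
      simp only [Complex.inv_re]
      have hre1 : 1 - ‖w‖ ≤ (1 - w * e x).re := by
        have h2 : (w * e x).re ≤ ‖w * e x‖ := Complex.re_le_norm _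
        rw [norm_mul, hnorm x, mul_one] at h2
        simp only [Complex.sub_re, Complex.one_re]
        linarith
      have hnsq : Complex.normSq (1 - w * e x) ≤ (1 + ‖w‖) ^ 2 := by
        rw [Complex.normSq_eq_norm_sq]
        have hub : ‖1 - w * e x‖ ≤ 1 + ‖w‖ := by
          have := norm_sub_le (1 : ℂ) (w * e x)
          simpa [norm_mul, hnorm x] using this
        have hnn : (0:ℝ) ≤ ‖1 - w * e x‖ := norm_nonneg _
        have hwn : (0:ℝ) ≤ ‖w‖ := norm_nonneg _
        exact sq_le_sq' (by linarith) hub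
      have hnsq_pos : 0 < Complex.normSq (1 - w * e x) :=
        Complex.normSq_pos.mpr (hden_ne x)
      exact div_le_div₀ (le_trans hwpos.le hre1) hre1 hnsq_pos hnsq
    have hireq : ∫ x, (g x).re ∂μ = (∫ x, g x ∂μ).re := by
      simpa using integral_re hgint
    have hpos : 0 < (∫ x, g x ∂μ).re := by
      rw [← hireq]
      have h1 : ∫ _x, c ∂μ ≤ ∫ x, (g x).re ∂μ :=
        integral_mono (integrable_const c) hgint.re (fun x => hre x)
      have h2 : ∫ _x, c ∂μ = c := by simp
      linarith
    intro h
    rw [h] at hpos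
    simp at hpos
  -- rewrite the NCTs
  have hN0 : NCT μ f 0 = m := by
    simp [NCT, hm]
  have hNw : NCT μ f w = (∫ x, f x * g x ∂μ) / (∫ x, g x ∂μ) := by
    simp only [NCT, div_eq_mul_inv, one_mul, hg, he]
  have hNR : NCT μ (fun x => e x * (f x - m)) w
      = (∫ x, e x * (f x - m) * g x ∂μ) / (∫ x, g x ∂μ) := by
    simp only [NCT, div_eq_mul_inv, one_mul, hg, he]
  rw [hN0, hNw, hNR]
  have hAB : (∫ x, f x * g x ∂μ) - m * (∫ x, g x ∂μ)
      = w * ∫ x, e x * (f x - m) * g x ∂μ := by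
    rw [← hkey]
    have h1 : ∫ x, (f x - m) * g x ∂μ = ∫ x, (f x * g x - m * g x) ∂μ := by
      apply integral_congr_ae; filter_upwards with x; ring
    rw [h1, integral_sub hfg (hgint.const_mul m), integral_const_mul]
  field_simp
  linear_combination hAB
end

section
/- Consider the iterated function system on [0,1) consisting of the maps λ₀(x) = x/3, λ₁(x) = (x+1)/3, λ₂(x) = (x+2)/3 with weights 8/20, 4/20, 8/20 respectively. Its Hutchinson invariant measure is singular with respect to Lebesgue measure on [0,1). -/
open MeasureTheory BoundedContinuousFunction

namespace Stmt13Aux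

/-- `i`-th base-3 digit of `k`. -/
def dg (k i : ℕ) : ℕ := (k / 3 ^ i) % 3

/-- number of digits equal to 1 among the first `n` digits. -/
def cnt (n k : ℕ) : ℕ := ((Finset.range n).filter (fun i => dg k i = 1)).card

noncomputable def w : ℕ → ℝ := fun d => if d = 1 then 4 / 20 else 8 / 20

noncomputable def W (n k : ℕ) : ℝ := ∏ i ∈ Finset.range n, w (dg k i)

lemma w_nonneg (d : ℕ) : 0 ≤ w d := by unfold w; split <;> norm_num

lemma W_nonneg (n k : ℕ) : 0 ≤ W n k :=
  Finset.prod_nonneg fun i _ => w_nonneg _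

lemma dg_zero (k : ℕ) : dg k 0 = k % 3 := by simp [dg]

lemma dg_succ (k i : ℕ) : dg k (i + 1) = dg (k / 3) i := by
  simp [dg, Nat.div_div_eq_div_mul, pow_succ']

lemma prodsum (v : ℕ → ℝ) :
    ∀ n, ∑ k ∈ Finset.range (3 ^ n), ∏ i ∈ Finset.range n, v (dg k i)
      = (v 0 + v 1 + v 2) ^ n := by
  intro n
  induction n with
  | zero => simp
  | succ n ih =>
    have key : ∀ k, ∏ i ∈ Finset.range (n + 1), v (dg k i)
        = v (k % 3) * ∏ i ∈ Finset.range n, v (dg (k / 3) i) := by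
      intro k
      rw [Finset.prod_range_succ']
      rw [dg_zero, mul_comm]
      congr 1
      exact Finset.prod_congr rfl fun i _ => by rw [dg_succ]
    calc ∑ k ∈ Finset.range (3 ^ (n + 1)), ∏ i ∈ Finset.range (n + 1), v (dg k i)
        = ∑ p ∈ Finset.range 3 ×ˢ Finset.range (3 ^ n),
            v (p.1) * ∏ i ∈ Finset.range n, v (dg p.2 i) := by
          refine Finset.sum_bij' (fun k _ => (k % 3, k / 3)) (fun p _ => p.1 + 3 * p.2)
            ?_ ?_ ?_ ?_ ?_
          · intro k hk
            simp only [Finset.mem_range] at hk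
            simp only [Finset.mem_product, Finset.mem_range]
            constructor
            · exact Nat.mod_lt _ (by norm_num)
            · exact Nat.div_lt_of_lt_mul (by rwa [← pow_succ'] )
          · intro p hp
            simp only [Finset.mem_product, Finset.mem_range] at hp
            simp only [Finset.mem_range, pow_succ']
            have := hp.1
            have := hp.2
            omega
          · intro x hx
            dsimp only
            first
            | omega
            | (obtain ⟨a, b⟩ := x
               simp only [Finset.mem_product, Finset.mem_range] at hx
               simp only [Prod.mk.injEq]
               omega)
          · intro x hx
            first
            | omega
            | (obtain ⟨a, b⟩ := x
               simp only [Finset.mem_product, Finset.mem_range] at hx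
               simp only [Prod.mk.injEq]
               omega)
          · intro k hk
            rw [key k]
      _ = (∑ s ∈ Finset.range 3, v s) *
            (∑ q ∈ Finset.range (3 ^ n), ∏ i ∈ Finset.range n, v (dg q i)) := by
          rw [Finset.sum_product, Finset.sum_mul]
          exact Finset.sum_congr rfl fun s _ => by rw [Finset.mul_sum]
      _ = (v 0 + v 1 + v 2) ^ (n + 1) := by
          rw [ih, Finset.sum_range_succ, Finset.sum_range_succ, Finset.sum_range_one,
            pow_succ']

lemma prod_ite_pow (n k : ℕ) (a : ℝ) (f : ℕ → ℝ) :
    ∏ i ∈ Finset.range n, ((if dg k i = 1 then a else 1) * f (dg k i))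
      = a ^ cnt n k * ∏ i ∈ Finset.range n, f (dg k i) := by
  rw [Finset.prod_mul_distrib, cnt]
  congr 1
  rw [Finset.prod_ite, Finset.prod_const, Finset.prod_const_one, mul_one]

lemma tail_mu (n : ℕ) :
    ∑ k ∈ (Finset.range (3 ^ n)).filter (fun k => ¬ 4 * cnt n k ≤ n), W n k
      ≤ (54641 / 55000 : ℝ) ^ n := by
  set w' : ℕ → ℝ := fun d => (if d = 1 then (11 / 10 : ℝ) ^ 4 else 1) * w d with hw'
  have hw'nonneg : ∀ d, 0 ≤ w' d := by
    intro d
    apply mul_nonneg _ (w_nonneg d)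
    split <;> norm_num
  have key : ∀ k ∈ (Finset.range (3 ^ n)).filter (fun k => ¬ 4 * cnt n k ≤ n),
      W n k ≤ (10 / 11 : ℝ) ^ n * ∏ i ∈ Finset.range n, w' (dg k i) := by
    intro k hk
    simp only [Finset.mem_filter, not_le] at hk
    have hc : n ≤ 4 * cnt n k := le_of_lt hk.2
    rw [hw']
    rw [prod_ite_pow n k ((11 / 10 : ℝ) ^ 4) (fun d => w d)]
    have h1 : (1 : ℝ) ≤ (10 / 11 : ℝ) ^ n * ((11 / 10 : ℝ) ^ 4) ^ cnt n k := by
      rw [← pow_mul]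
      have h2 : (11 / 10 : ℝ) ^ n ≤ (11 / 10 : ℝ) ^ (4 * cnt n k) :=
        pow_le_pow_right₀ (by norm_num) hc
      calc (1 : ℝ) = (10 / 11 : ℝ) ^ n * (11 / 10 : ℝ) ^ n := by
            rw [← mul_pow]; norm_num
        _ ≤ (10 / 11 : ℝ) ^ n * (11 / 10 : ℝ) ^ (4 * cnt n k) := by
            apply mul_le_mul_of_nonneg_left h2 (by positivity)
    calc W n k = 1 * W n k := (one_mul _).symm
      _ ≤ ((10 / 11 : ℝ) ^ n * ((11 / 10 : ℝ) ^ 4) ^ cnt n k) * W n k :=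
          mul_le_mul_of_nonneg_right h1 (W_nonneg n k)
      _ = (10 / 11 : ℝ) ^ n * (((11 / 10 : ℝ) ^ 4) ^ cnt n k * W n k) := by ring
      _ = _ := by rw [W]
  calc ∑ k ∈ (Finset.range (3 ^ n)).filter (fun k => ¬ 4 * cnt n k ≤ n), W n k
      ≤ ∑ k ∈ (Finset.range (3 ^ n)).filter (fun k => ¬ 4 * cnt n k ≤ n),
          (10 / 11 : ℝ) ^ n * ∏ i ∈ Finset.range n, w' (dg k i) :=
        Finset.sum_le_sum key
    _ ≤ ∑ k ∈ Finset.range (3 ^ n),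
          (10 / 11 : ℝ) ^ n * ∏ i ∈ Finset.range n, w' (dg k i) := by
        apply Finset.sum_le_sum_of_subset_of_nonneg (Finset.filter_subset _ _)
        intro k _ _
        exact mul_nonneg (by positivity) (Finset.prod_nonneg fun i _ => hw'nonneg _)
    _ = (10 / 11 : ℝ) ^ n * (w' 0 + w' 1 + w' 2) ^ n := by
        rw [← Finset.mul_sum, prodsum w' n]
    _ = ((10 / 11 : ℝ) * (w' 0 + w' 1 + w' 2)) ^ n := by rw [mul_pow]
    _ = (54641 / 55000 : ℝ) ^ n := by
        congr 1
        simp only [hw', w]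
        norm_num

lemma tail_vol (n : ℕ) :
    ∑ _k ∈ (Finset.range (3 ^ n)).filter (fun k => 4 * cnt n k ≤ n), (1 / 3 : ℝ) ^ n
      ≤ (72017 / 73205 : ℝ) ^ n := by
  set v' : ℕ → ℝ := fun d => (if d = 1 then (10 / 11 : ℝ) ^ 4 else 1) * (1 / 3 : ℝ) with hv'
  have hv'nonneg : ∀ d, 0 ≤ v' d := by
    intro d
    apply mul_nonneg _ (by norm_num)
    split <;> norm_num
  have key : ∀ k ∈ (Finset.range (3 ^ n)).filter (fun k => 4 * cnt n k ≤ n),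
      (1 / 3 : ℝ) ^ n ≤ (11 / 10 : ℝ) ^ n * ∏ i ∈ Finset.range n, v' (dg k i) := by
    intro k hk
    simp only [Finset.mem_filter] at hk
    have hc : 4 * cnt n k ≤ n := hk.2
    rw [hv']
    rw [prod_ite_pow n k ((10 / 11 : ℝ) ^ 4) (fun _ => (1 / 3 : ℝ))]
    rw [Finset.prod_const, Finset.card_range]
    have h1 : (1 : ℝ) ≤ (11 / 10 : ℝ) ^ n * ((10 / 11 : ℝ) ^ 4) ^ cnt n k := by
      rw [← pow_mul]
      have h2 : (11 / 10 : ℝ) ^ (4 * cnt n k) ≤ (11 / 10 : ℝ) ^ n :=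
        pow_le_pow_right₀ (by norm_num) hc
      have h3 : (0 : ℝ) < (10 / 11 : ℝ) ^ (4 * cnt n k) := by positivity
      calc (1 : ℝ) = (11 / 10 : ℝ) ^ (4 * cnt n k) * (10 / 11 : ℝ) ^ (4 * cnt n k) := by
            rw [← mul_pow]; norm_num
        _ ≤ (11 / 10 : ℝ) ^ n * (10 / 11 : ℝ) ^ (4 * cnt n k) :=
            mul_le_mul_of_nonneg_right h2 (le_of_lt h3)
    calc (1 / 3 : ℝ) ^ n = 1 * (1 / 3 : ℝ) ^ n := (one_mul _).symm
      _ ≤ ((11 / 10 : ℝ) ^ n * ((10 / 11 : ℝ) ^ 4) ^ cnt n k) * (1 / 3 : ℝ) ^ n :=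
          mul_le_mul_of_nonneg_right h1 (by positivity)
      _ = (11 / 10 : ℝ) ^ n * (((10 / 11 : ℝ) ^ 4) ^ cnt n k * (1 / 3 : ℝ) ^ n) := by ring
  calc ∑ _k ∈ (Finset.range (3 ^ n)).filter (fun k => 4 * cnt n k ≤ n), (1 / 3 : ℝ) ^ n
      ≤ ∑ k ∈ (Finset.range (3 ^ n)).filter (fun k => 4 * cnt n k ≤ n),
          (11 / 10 : ℝ) ^ n * ∏ i ∈ Finset.range n, v' (dg k i) :=
        Finset.sum_le_sum key
    _ ≤ ∑ k ∈ Finset.range (3 ^ n),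
          (11 / 10 : ℝ) ^ n * ∏ i ∈ Finset.range n, v' (dg k i) := by
        apply Finset.sum_le_sum_of_subset_of_nonneg (Finset.filter_subset _ _)
        intro k _ _
        exact mul_nonneg (by positivity) (Finset.prod_nonneg fun i _ => hv'nonneg _)
    _ = (11 / 10 : ℝ) ^ n * (v' 0 + v' 1 + v' 2) ^ n := by
        rw [← Finset.mul_sum, prodsum v' n]
    _ = ((11 / 10 : ℝ) * (v' 0 + v' 1 + v' 2)) ^ n := by rw [mul_pow]
    _ = (72017 / 73205 : ℝ) ^ n := by
        congr 1
        simp only [hv']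
        norm_num

lemma dg_mod (n k i : ℕ) (hi : i < n) : dg k i = dg (k % 3 ^ n) i := by
  have h0 : 0 < 3 ^ i := Nat.pow_pos (by norm_num)
  have hpow : 3 ^ i * (3 * 3 ^ (n - i - 1)) = 3 ^ n := by
    rw [← pow_succ']
    rw [← pow_add]
    congr 1
    omega
  have hk : k = k % 3 ^ n + 3 ^ i * (3 * (3 ^ (n - i - 1) * (k / 3 ^ n))) := by
    have h := Nat.div_add_mod k (3 ^ n)
    have h2 : 3 ^ n * (k / 3 ^ n) = 3 ^ i * (3 * (3 ^ (n - i - 1) * (k / 3 ^ n))) := by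
      rw [← hpow]; ring
    omega
  conv_lhs => rw [dg, hk]
  rw [Nat.add_mul_div_left _ _ h0, Nat.add_mul_mod_self_left]
  rfl

lemma W_succ (n k : ℕ) (hk : k < 3 ^ (n + 1)) :
    W (n + 1) k = w (k / 3 ^ n) * W n (k % 3 ^ n) := by
  rw [W, Finset.prod_range_succ, W]
  have h1 : dg k n = k / 3 ^ n := by
    rw [dg]
    refine Nat.mod_eq_of_lt (Nat.div_lt_of_lt_mul ?_)
    rwa [← pow_succ]
  rw [h1, mul_comm]
  congr 1
  exact Finset.prod_congr rfl fun i hi => by rw [dg_mod n k i (Finset.mem_range.mp hi)]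

end Stmt13Aux

open MeasureTheory BoundedContinuousFunction Stmt13Aux
open scoped ENNReal NNReal

/-- The Hutchinson invariant measure of the IFS on `[0,1)` given by
`λ₀(x)=x/3`, `λ₁(x)=(x+1)/3`, `λ₂(x)=(x+2)/3` with weights `8/20, 4/20, 8/20`
is singular with respect to Lebesgue measure. -/
theorem stmt13 (μ : Measure ℝ) [IsProbabilityMeasure μ]
    (hsupp : μ (Set.Ico (0 : ℝ) 1)ᶜ = 0)
    (hinv : ∀ f : ℝ →ᵇ ℝ,
      ∫ x, f x ∂μ
        = (8 / 20) * ∫ x, f (x / 3) ∂μ + (4 / 20) * ∫ x, f ((x + 1) / 3) ∂μ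
            + (8 / 20) * ∫ x, f ((x + 2) / 3) ∂μ) :
    μ ⟂ₘ (volume : Measure ℝ) := by
  classical
  -- the three contractions
  have hc0 : Continuous (fun x : ℝ => x / 3) := continuous_id.div_const 3
  have hc1 : Continuous (fun x : ℝ => (x + 1) / 3) := (continuous_id.add continuous_const).div_const 3
  have hc2 : Continuous (fun x : ℝ => (x + 2) / 3) := (continuous_id.add continuous_const).div_const 3
  have hm0 : Measurable (fun x : ℝ => x / 3) := hc0.measurable
  have hm1 : Measurable (fun x : ℝ => (x + 1) / 3) := hc1.measurable
  have hm2 : Measurable (fun x : ℝ => (x + 2) / 3) := hc2.measurable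
  set p0 : ℝ≥0∞ := ENNReal.ofReal (8 / 20) with hp0
  set p1 : ℝ≥0∞ := ENNReal.ofReal (4 / 20) with hp1
  set ν : Measure ℝ :=
    p0 • μ.map (fun x : ℝ => x / 3) + p1 • μ.map (fun x : ℝ => (x + 1) / 3)
      + p0 • μ.map (fun x : ℝ => (x + 2) / 3) with hν
  -- Step 1: μ is self-similar as a measure
  have hμν : μ = ν := by
    apply ext_of_forall_lintegral_eq_of_IsFiniteMeasure
    intro f
    have hfm : Measurable fun x : ℝ => (f x : ℝ≥0∞) :=
      measurable_coe_nnreal_ennreal.comp f.continuous.measurable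
    have hRHS : ∫⁻ x, (f x : ℝ≥0∞) ∂ν
        = p0 * ∫⁻ x, (f (x / 3) : ℝ≥0∞) ∂μ + p1 * ∫⁻ x, (f ((x + 1) / 3) : ℝ≥0∞) ∂μ
          + p0 * ∫⁻ x, (f ((x + 2) / 3) : ℝ≥0∞) ∂μ := by
      rw [hν, lintegral_add_measure, lintegral_add_measure, lintegral_smul_measure,
        lintegral_smul_measure, lintegral_smul_measure,
        lintegral_map hfm hm0, lintegral_map hfm hm1, lintegral_map hfm hm2]
      simp only [smul_eq_mul]
    have hfin0 : (∫⁻ x, (f (x / 3) : ℝ≥0∞) ∂μ) ≠ ⊤ :=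
      (lintegral_lt_top_of_nnreal μ (f.compContinuous ⟨_, hc0⟩)).ne
    have hfin1 : (∫⁻ x, (f ((x + 1) / 3) : ℝ≥0∞) ∂μ) ≠ ⊤ :=
      (lintegral_lt_top_of_nnreal μ (f.compContinuous ⟨_, hc1⟩)).ne
    have hfin2 : (∫⁻ x, (f ((x + 2) / 3) : ℝ≥0∞) ∂μ) ≠ ⊤ :=
      (lintegral_lt_top_of_nnreal μ (f.compContinuous ⟨_, hc2⟩)).ne
    have hfinL : (∫⁻ x, (f x : ℝ≥0∞) ∂μ) ≠ ⊤ := (lintegral_lt_top_of_nnreal μ f).ne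
    have hp0ne : p0 ≠ ⊤ := ENNReal.ofReal_ne_top
    have hp1ne : p1 ≠ ⊤ := ENNReal.ofReal_ne_top
    have hm00 : p0 * ∫⁻ x, (f (x / 3) : ℝ≥0∞) ∂μ ≠ ⊤ := ENNReal.mul_ne_top hp0ne hfin0
    have hm11 : p1 * ∫⁻ x, (f ((x + 1) / 3) : ℝ≥0∞) ∂μ ≠ ⊤ := ENNReal.mul_ne_top hp1ne hfin1
    have hm22 : p0 * ∫⁻ x, (f ((x + 2) / 3) : ℝ≥0∞) ∂μ ≠ ⊤ := ENNReal.mul_ne_top hp0ne hfin2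
    have hfinR : (∫⁻ x, (f x : ℝ≥0∞) ∂ν) ≠ ⊤ := by
      rw [hRHS]
      exact ENNReal.add_ne_top.mpr ⟨ENNReal.add_ne_top.mpr ⟨hm00, hm11⟩, hm22⟩
    -- the real-valued version of f
    let fR : ℝ →ᵇ ℝ := ⟨⟨fun x => (f x : ℝ), NNReal.continuous_coe.comp f.continuous⟩, by
      obtain ⟨C, hC⟩ := f.map_bounded'
      exact ⟨C, fun x y => by
        show dist ((f x : ℝ)) ((f y : ℝ)) ≤ C
        rw [Real.dist_eq, ← NNReal.dist_eq]
        exact hC x y⟩⟩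
    have hfR := hinv fR
    have hfRc : ∀ x : ℝ, fR x = (f x : ℝ) := fun x => rfl
    have hi : (∫⁻ x, (f x : ℝ≥0∞) ∂μ).toReal = ∫ x, (f x : ℝ) ∂μ :=
      toReal_lintegral_coe_eq_integral f μ
    have hi0 : (∫⁻ x, (f (x / 3) : ℝ≥0∞) ∂μ).toReal = ∫ x, (f (x / 3) : ℝ) ∂μ :=
      toReal_lintegral_coe_eq_integral (f.compContinuous ⟨_, hc0⟩) μ
    have hi1 : (∫⁻ x, (f ((x + 1) / 3) : ℝ≥0∞) ∂μ).toReal = ∫ x, (f ((x + 1) / 3) : ℝ) ∂μ :=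
      toReal_lintegral_coe_eq_integral (f.compContinuous ⟨_, hc1⟩) μ
    have hi2 : (∫⁻ x, (f ((x + 2) / 3) : ℝ≥0∞) ∂μ).toReal = ∫ x, (f ((x + 2) / 3) : ℝ) ∂μ :=
      toReal_lintegral_coe_eq_integral (f.compContinuous ⟨_, hc2⟩) μ
    have htR : (∫⁻ x, (f x : ℝ≥0∞) ∂μ).toReal = (∫⁻ x, (f x : ℝ≥0∞) ∂ν).toReal := by
      rw [hRHS, ENNReal.toReal_add (ENNReal.add_ne_top.mpr ⟨hm00, hm11⟩) hm22,
        ENNReal.toReal_add hm00 hm11, ENNReal.toReal_mul, ENNReal.toReal_mul,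
        ENNReal.toReal_mul, hi, hi0, hi1, hi2, hp0, hp1,
        ENNReal.toReal_ofReal (by norm_num : (0:ℝ) ≤ 8 / 20),
        ENNReal.toReal_ofReal (by norm_num : (0:ℝ) ≤ 4 / 20)]
      exact hfR
    exact (ENNReal.toReal_eq_toReal_iff' hfinL hfinR).mp htR
  have hset : ∀ S : Set ℝ, MeasurableSet S →
      μ S = p0 * μ ((fun x : ℝ => x / 3) ⁻¹' S) + p1 * μ ((fun x : ℝ => (x + 1) / 3) ⁻¹' S)
        + p0 * μ ((fun x : ℝ => (x + 2) / 3) ⁻¹' S) := by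
    intro S hS
    conv_lhs => rw [hμν]
    rw [hν]
    simp [Measure.add_apply, Measure.smul_apply, Measure.map_apply hm0 hS,
      Measure.map_apply hm1 hS, Measure.map_apply hm2 hS, smul_eq_mul]
  -- preimages of Ico
  have hpre0 : ∀ a b : ℝ, (fun x : ℝ => x / 3) ⁻¹' Set.Ico a b = Set.Ico (3 * a) (3 * b) := by
    intro a b; ext x
    simp only [Set.mem_preimage, Set.mem_Ico]
    constructor <;> rintro ⟨h1, h2⟩ <;> exact ⟨by linarith, by linarith⟩
  have hpre1 : ∀ a b : ℝ, (fun x : ℝ => (x + 1) / 3) ⁻¹' Set.Ico a b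
      = Set.Ico (3 * a - 1) (3 * b - 1) := by
    intro a b; ext x
    simp only [Set.mem_preimage, Set.mem_Ico]
    constructor <;> rintro ⟨h1, h2⟩ <;> exact ⟨by linarith, by linarith⟩
  have hpre2 : ∀ a b : ℝ, (fun x : ℝ => (x + 2) / 3) ⁻¹' Set.Ico a b
      = Set.Ico (3 * a - 2) (3 * b - 2) := by
    intro a b; ext x
    simp only [Set.mem_preimage, Set.mem_Ico]
    constructor <;> rintro ⟨h1, h2⟩ <;> exact ⟨by linarith, by linarith⟩
  -- intervals outside [0,1) are null
  have hnull : ∀ a b : ℝ, (b ≤ 0 ∨ 1 ≤ a) → μ (Set.Ico a b) = 0 := by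
    intro a b hab
    refine measure_mono_null ?_ hsupp
    rintro x ⟨h1, h2⟩
    simp only [Set.mem_compl_iff, Set.mem_Ico, not_and, not_lt]
    rcases hab with h | h
    · intro h0; linarith
    · intro h0; linarith
  -- Step 2: measures of triadic intervals
  have hIco : ∀ n k : ℕ, k < 3 ^ n →
      μ (Set.Ico ((k : ℝ) / 3 ^ n) (((k : ℝ) + 1) / 3 ^ n)) = ENNReal.ofReal (W n k) := by
    intro n
    induction n with
    | zero =>
      intro k hk
      have hk0 : k = 0 := Nat.lt_one_iff.mp (by simpa using hk)
      subst hk0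
      have h1 : μ (Set.Ico (0 : ℝ) 1) = 1 := by
        have h := measure_add_measure_compl (μ := μ)
          (measurableSet_Ico : MeasurableSet (Set.Ico (0 : ℝ) 1))
        rw [hsupp, add_zero, measure_univ] at h
        exact h
      simpa [W] using h1
    | succ n ih =>
      intro k hk
      have h3 : (0 : ℝ) < 3 ^ n := by positivity
      have hd3 : k / 3 ^ n < 3 := Nat.div_lt_of_lt_mul (by rwa [← pow_succ])
      have hr : k % 3 ^ n < 3 ^ n := Nat.mod_lt _ (by positivity)
      have hk2 : k = 3 ^ n * (k / 3 ^ n) + k % 3 ^ n := (Nat.div_add_mod k (3 ^ n)).symm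
      have hWs := W_succ n k hk
      rw [hset _ measurableSet_Ico, hpre0, hpre1, hpre2]
      have e0 : 3 * ((k : ℝ) / 3 ^ (n + 1)) = (k : ℝ) / 3 ^ n := by
        rw [pow_succ]; field_simp
      have e1 : 3 * (((k : ℝ) + 1) / 3 ^ (n + 1)) = ((k : ℝ) + 1) / 3 ^ n := by
        rw [pow_succ]; field_simp
      rw [e0, e1]
      generalize hq : k / 3 ^ n = q at hd3 hk2 hWs
      generalize hrdef : k % 3 ^ n = r at hr hk2 hWs
      have hd012 : q = 0 ∨ q = 1 ∨ q = 2 := by omega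
      have hrR : (r : ℝ) < 3 ^ n := by exact_mod_cast hr
      have hrR' : (r : ℝ) + 1 ≤ 3 ^ n := by exact_mod_cast Nat.succ_le_of_lt hr
      have hw0 : w 0 = (8 : ℝ) / 20 := by simp [w]
      have hw1 : w 1 = (4 : ℝ) / 20 := by simp [w]
      have hw2 : w 2 = (8 : ℝ) / 20 := by simp [w]
      rcases hd012 with h | h | h
      · -- leading digit 0
        rw [h, mul_zero, zero_add] at hk2
        have hklt : k < 3 ^ n := hk2 ▸ hr
        have hb1 : ((k : ℝ) + 1) / 3 ^ n - 1 ≤ 0 := by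
          rw [sub_nonpos, div_le_one h3]
          exact_mod_cast Nat.succ_le_of_lt hklt
        have hb2 : ((k : ℝ) + 1) / 3 ^ n - 2 ≤ 0 := by linarith
        rw [hnull ((k : ℝ) / 3 ^ n - 1) (((k : ℝ) + 1) / 3 ^ n - 1) (Or.inl hb1),
          hnull ((k : ℝ) / 3 ^ n - 2) (((k : ℝ) + 1) / 3 ^ n - 2) (Or.inl hb2),
          mul_zero, mul_zero, add_zero, add_zero, ih k hklt, hWs, h, hw0, ← hk2,
          ENNReal.ofReal_mul (by norm_num : (0:ℝ) ≤ 8 / 20)]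
      · -- leading digit 1
        rw [h, mul_one] at hk2
        have hkR1 : (k : ℝ) = 3 ^ n + (r : ℝ) := by exact_mod_cast hk2
        have hb0 : (1 : ℝ) ≤ (k : ℝ) / 3 ^ n := by
          rw [le_div_iff₀ h3, one_mul, hkR1]
          linarith
        have hb2 : ((k : ℝ) + 1) / 3 ^ n - 2 ≤ 0 := by
          rw [sub_nonpos, div_le_iff₀ h3, hkR1]
          linarith
        have ee1 : (k : ℝ) / 3 ^ n - 1 = (r : ℝ) / 3 ^ n := by
          rw [hkR1]; field_simp; ring
        have ee2 : ((k : ℝ) + 1) / 3 ^ n - 1 = ((r : ℝ) + 1) / 3 ^ n := by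
          rw [hkR1]; field_simp; ring
        rw [hnull ((k : ℝ) / 3 ^ n) (((k : ℝ) + 1) / 3 ^ n) (Or.inr hb0),
          hnull ((k : ℝ) / 3 ^ n - 2) (((k : ℝ) + 1) / 3 ^ n - 2) (Or.inl hb2),
          mul_zero, zero_add, add_zero, ee1, ee2, ih r hr, hWs, h, hw1,
          ENNReal.ofReal_mul (by norm_num : (0:ℝ) ≤ 4 / 20)]
      · -- leading digit 2
        rw [h] at hk2
        have hkR2 : (k : ℝ) = 3 ^ n * 2 + (r : ℝ) := by exact_mod_cast hk2
        have hb0 : (1 : ℝ) ≤ (k : ℝ) / 3 ^ n := by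
          rw [le_div_iff₀ h3, one_mul, hkR2]
          linarith
        have hb1 : (1 : ℝ) ≤ (k : ℝ) / 3 ^ n - 1 := by
          have h2 : (2 : ℝ) ≤ (k : ℝ) / 3 ^ n := by
            rw [le_div_iff₀ h3, hkR2]
            linarith
          linarith
        have ee1 : (k : ℝ) / 3 ^ n - 2 = (r : ℝ) / 3 ^ n := by
          rw [hkR2]; field_simp; ring
        have ee2 : ((k : ℝ) + 1) / 3 ^ n - 2 = ((r : ℝ) + 1) / 3 ^ n := by
          rw [hkR2]; field_simp; ring
        rw [hnull ((k : ℝ) / 3 ^ n) (((k : ℝ) + 1) / 3 ^ n) (Or.inr hb0),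
          hnull ((k : ℝ) / 3 ^ n - 1) (((k : ℝ) + 1) / 3 ^ n - 1) (Or.inr hb1),
          mul_zero, mul_zero, zero_add, zero_add, ee1, ee2, ih r hr, hWs, h, hw2,
          ENNReal.ofReal_mul (by norm_num : (0:ℝ) ≤ 8 / 20)]
  -- Step 3: the bad sets
  set A : ℕ → Set ℝ := fun n =>
    ⋃ k ∈ (Finset.range (3 ^ n)).filter (fun k => 4 * cnt n k ≤ n),
      Set.Ico ((k : ℝ) / 3 ^ n) (((k : ℝ) + 1) / 3 ^ n) with hA
  have hAmeas : ∀ n, MeasurableSet (A n) := fun n =>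
    Finset.measurableSet_biUnion _ fun k _ => measurableSet_Ico
  have hvol : ∀ n, volume (A n) ≤ ENNReal.ofReal ((72017 / 73205 : ℝ) ^ n) := by
    intro n
    calc volume (A n)
        ≤ ∑ k ∈ (Finset.range (3 ^ n)).filter (fun k => 4 * cnt n k ≤ n),
            volume (Set.Ico ((k : ℝ) / 3 ^ n) (((k : ℝ) + 1) / 3 ^ n)) :=
          measure_biUnion_finset_le _ _
      _ = ∑ _k ∈ (Finset.range (3 ^ n)).filter (fun k => 4 * cnt n k ≤ n),
            ENNReal.ofReal ((1 / 3 : ℝ) ^ n) := by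
          refine Finset.sum_congr rfl fun k _ => ?_
          rw [Real.volume_Ico]
          congr 1
          rw [div_sub_div_same, add_sub_cancel_left, div_pow, one_pow]
      _ = ENNReal.ofReal (∑ _k ∈ (Finset.range (3 ^ n)).filter (fun k => 4 * cnt n k ≤ n),
            (1 / 3 : ℝ) ^ n) :=
          (ENNReal.ofReal_sum_of_nonneg fun _ _ => by positivity).symm
      _ ≤ ENNReal.ofReal ((72017 / 73205 : ℝ) ^ n) := ENNReal.ofReal_le_ofReal (tail_vol n)
  have hcover : ∀ n : ℕ, ∀ x ∈ Set.Ico (0 : ℝ) 1, ∃ k : ℕ, k < 3 ^ n ∧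
      (k : ℝ) / 3 ^ n ≤ x ∧ x < ((k : ℝ) + 1) / 3 ^ n := by
    intro n x hx
    obtain ⟨hx0, hx1⟩ := hx
    have h3 : (0 : ℝ) < 3 ^ n := by positivity
    have hxn : 0 ≤ x * 3 ^ n := mul_nonneg hx0 h3.le
    refine ⟨⌊x * 3 ^ n⌋₊, ?_, ?_, ?_⟩
    · rw [Nat.floor_lt hxn]
      push_cast
      have := mul_lt_mul_of_pos_right hx1 h3
      simpa using this
    · rw [div_le_iff₀ h3]
      exact Nat.floor_le hxn
    · rw [lt_div_iff₀ h3]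
      have := Nat.lt_floor_add_one (x * 3 ^ n)
      push_cast at this ⊢
      linarith
  have hμc : ∀ n, μ (A n)ᶜ ≤ ENNReal.ofReal ((54641 / 55000 : ℝ) ^ n) := by
    intro n
    have hsub2 : (A n)ᶜ ∩ Set.Ico (0 : ℝ) 1 ⊆
        ⋃ k ∈ (Finset.range (3 ^ n)).filter (fun k => ¬ 4 * cnt n k ≤ n),
          Set.Ico ((k : ℝ) / 3 ^ n) (((k : ℝ) + 1) / 3 ^ n) := by
      rintro x ⟨hxA, hx01⟩
      obtain ⟨k, hk3, hk1, hk2⟩ := hcover n x hx01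
      have hknA : ¬ 4 * cnt n k ≤ n := by
        intro hcle
        apply hxA
        rw [hA]
        exact Set.mem_biUnion (Finset.mem_coe.mpr (Finset.mem_filter.mpr
          ⟨Finset.mem_range.mpr hk3, hcle⟩)) ⟨hk1, hk2⟩
      exact Set.mem_biUnion (Finset.mem_coe.mpr (Finset.mem_filter.mpr
        ⟨Finset.mem_range.mpr hk3, hknA⟩)) ⟨hk1, hk2⟩
    calc μ (A n)ᶜ
        ≤ μ (((A n)ᶜ ∩ Set.Ico (0 : ℝ) 1) ∪ (Set.Ico (0 : ℝ) 1)ᶜ) := by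
          apply measure_mono
          intro x hx
          by_cases h : x ∈ Set.Ico (0 : ℝ) 1
          · exact Or.inl ⟨hx, h⟩
          · exact Or.inr h
      _ ≤ μ ((A n)ᶜ ∩ Set.Ico (0 : ℝ) 1) + μ (Set.Ico (0 : ℝ) 1)ᶜ := measure_union_le _ _
      _ = μ ((A n)ᶜ ∩ Set.Ico (0 : ℝ) 1) := by rw [hsupp, add_zero]
      _ ≤ μ (⋃ k ∈ (Finset.range (3 ^ n)).filter (fun k => ¬ 4 * cnt n k ≤ n),
            Set.Ico ((k : ℝ) / 3 ^ n) (((k : ℝ) + 1) / 3 ^ n)) := measure_mono hsub2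
      _ ≤ ∑ k ∈ (Finset.range (3 ^ n)).filter (fun k => ¬ 4 * cnt n k ≤ n),
            μ (Set.Ico ((k : ℝ) / 3 ^ n) (((k : ℝ) + 1) / 3 ^ n)) :=
          measure_biUnion_finset_le _ _
      _ = ∑ k ∈ (Finset.range (3 ^ n)).filter (fun k => ¬ 4 * cnt n k ≤ n),
            ENNReal.ofReal (W n k) :=
          Finset.sum_congr rfl fun k hk =>
            hIco n k (Finset.mem_range.mp (Finset.mem_filter.mp hk).1)
      _ = ENNReal.ofReal (∑ k ∈ (Finset.range (3 ^ n)).filter (fun k => ¬ 4 * cnt n k ≤ n),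
            W n k) := (ENNReal.ofReal_sum_of_nonneg fun k _ => W_nonneg n k).symm
      _ ≤ ENNReal.ofReal ((54641 / 55000 : ℝ) ^ n) := ENNReal.ofReal_le_ofReal (tail_mu n)
  -- geometric summability
  have hsumgeo : ∀ r : ℝ, 0 ≤ r → r < 1 → (∑' n : ℕ, ENNReal.ofReal (r ^ n)) ≠ ⊤ := by
    intro r h0 h1
    have he : ∀ n : ℕ, ENNReal.ofReal (r ^ n) = (ENNReal.ofReal r) ^ n :=
      fun n => ENNReal.ofReal_pow h0 n
    rw [tsum_congr he, ENNReal.tsum_geometric]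
    have hlt : ENNReal.ofReal r < 1 := by rwa [ENNReal.ofReal_lt_one]
    have hne : (1 : ℝ≥0∞) - ENNReal.ofReal r ≠ 0 := fun h =>
      absurd (tsub_eq_zero_iff_le.mp h) (not_le.mpr hlt)
    exact ENNReal.inv_ne_top.mpr hne
  have hvs : (∑' n : ℕ, volume (A n)) ≠ ⊤ :=
    ne_top_of_le_ne_top (hsumgeo _ (by norm_num) (by norm_num)) (ENNReal.tsum_le_tsum hvol)
  have hms : (∑' n : ℕ, μ (A n)ᶜ) ≠ ⊤ :=
    ne_top_of_le_ne_top (hsumgeo _ (by norm_num) (by norm_num)) (ENNReal.tsum_le_tsum hμc)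
  have hS0 : volume (Filter.limsup A Filter.atTop) = 0 :=
    measure_limsup_atTop_eq_zero hvs
  have hSc : μ (Filter.limsup (fun n => (A n)ᶜ) Filter.atTop) = 0 :=
    measure_limsup_atTop_eq_zero hms
  have hsub : (Filter.limsup A Filter.atTop)ᶜ ⊆ Filter.limsup (fun n => (A n)ᶜ) Filter.atTop := by
    intro x hx
    rw [Filter.limsup_eq_iInf_iSup_of_nat] at hx ⊢
    simp only [Set.iInf_eq_iInter, Set.iSup_eq_iUnion, Set.mem_compl_iff, Set.mem_iInter,
      Set.mem_iUnion, not_forall, not_exists] at hx ⊢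
    obtain ⟨n, hn⟩ := hx
    intro j
    exact ⟨max n j, le_max_right _ _, hn (max n j) (le_max_left _ _)⟩
  refine ⟨(Filter.limsup A Filter.atTop)ᶜ, ?_, ?_, ?_⟩
  · apply MeasurableSet.compl
    rw [Filter.limsup_eq_iInf_iSup_of_nat]
    simp only [Set.iInf_eq_iInter, Set.iSup_eq_iUnion]
    exact MeasurableSet.iInter fun n => MeasurableSet.iUnion fun i =>
      MeasurableSet.iUnion fun _ => hAmeas i
  · exact measure_mono_null hsub hSc
  · rw [compl_compl]; exact hS0
end

section
/- Let U be a unitary operator on a Hilbert space H and C a closed subspace of H. For each w in the open unit disk there exists a unique bounded operator B(w) on C such that ⟨(1+wU*)(1−wU*)^{-1} a, c⟩ = ⟨(I+B(w))(I−B(w))^{-1} a, c⟩ for all a, c ∈ C; moreover ‖B(w)‖ ≤ |w|, so I − B(w) is invertible. -/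
set_option maxHeartbeats 1000000
set_option synthInstance.maxHeartbeats 200000


open MeasureTheory ContinuousLinearMap

section Stmt19Aux

variable {H : Type*} [NormedAddCommGroup H] [InnerProductSpace ℂ H] [CompleteSpace H]

local notation "⟪" x ", " y "⟫" => @inner ℂ _ _ x y

private lemma ringInv_eq {R : Type*} [Ring R] {a b : R} (h1 : a * b = 1) (h2 : b * a = 1) :
    Ring.inverse a = b := by
  exact Ring.inverse_unit (⟨a, b, h1, h2⟩ : Rˣ)

/-- The compression of the Cayley-type transform `(1+A)(1-A)⁻¹` to the subspace `K`. -/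
noncomputable def Sop (K : Submodule ℂ H) [CompleteSpace K] (A : H →L[ℂ] H) : K →L[ℂ] K :=
  (K.orthogonalProjection) ∘L (((1 + A).comp (Ring.inverse (1 - A))) ∘L K.subtypeL)

variable (K : Submodule ℂ H) [CompleteSpace K]

lemma norm_A_lt {A : H →L[ℂ] H} {r : ℝ} (hr1 : r < 1) (hr0 : 0 ≤ r)
    (hA : ∀ x, ‖A x‖ = r * ‖x‖) : ‖A‖ < 1 :=
  lt_of_le_of_lt (opNorm_le_bound A hr0 fun x => (hA x).le) hr1

lemma oneSub_mul_inv {A : H →L[ℂ] H} (hA : ‖A‖ < 1) :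
    (1 - A) * Ring.inverse (1 - A) = 1 :=
  Ring.mul_inverse_cancel _ (isUnit_one_sub_of_norm_lt_one hA)

lemma inv_mul_oneSub {A : H →L[ℂ] H} (hA : ‖A‖ < 1) :
    Ring.inverse (1 - A) * (1 - A) = 1 :=
  Ring.inverse_mul_cancel _ (isUnit_one_sub_of_norm_lt_one hA)

/-- Key quadratic inequality for the compressed Cayley transform. -/
lemma key_ineq {A : H →L[ℂ] H} {r : ℝ} (hr0 : 0 ≤ r) (hr1 : r < 1)
    (hA : ∀ x, ‖A x‖ = r * ‖x‖) (a : K) :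
    ‖Sop K A a - a‖ ≤ r * ‖Sop K A a + a‖ := by
  have hAn : ‖A‖ < 1 := norm_A_lt hr1 hr0 hA
  set X : H →L[ℂ] H := Ring.inverse (1 - A) with hX
  set y : H := X (a : H) with hy
  have hay : (a : H) = y - A y := by
    have h1 := oneSub_mul_inv hAn
    have := congrArg (fun f : H →L[ℂ] H => f (a : H)) h1
    simpa [ContinuousLinearMap.mul_apply, ContinuousLinearMap.sub_apply, hy, hX] using this.symm
  have hT : ((1 + A).comp X) (a : H) = y + A y := by
    simp [ContinuousLinearMap.comp_apply, ContinuousLinearMap.add_apply, hy]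
  set s : K := Sop K A a with hs
  have hsP : s = K.orthogonalProjection (y + A y) := by
    rw [hs, Sop]
    simp [ContinuousLinearMap.comp_apply, hT]
    rfl
  -- norm bound for projection
  have hs_le : ‖(s : H)‖ ≤ ‖y + A y‖ := by
    rw [hsP]
    calc ‖(K.orthogonalProjection (y + A y) : H)‖
        ≤ ‖K.orthogonalProjection‖ * ‖y + A y‖ := (K.orthogonalProjection).le_opNorm _
      _ ≤ 1 * ‖y + A y‖ := by
          exact mul_le_mul_of_nonneg_right (Submodule.orthogonalProjectionOnto_norm_le K) (norm_nonneg _)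
      _ = ‖y + A y‖ := one_mul _
  -- real part equality
  have hre : ⟪(s : H), (a : H)⟫ = ⟪y + A y, (a : H)⟫ := by
    rw [← Submodule.coe_inner, hsP]
    exact Submodule.inner_orthogonalProjection_eq_of_mem_right (K := K) a (y + A y)
  set t : ℝ := RCLike.re ⟪y, A y⟫ with ht
  have hAy : ‖A y‖ = r * ‖y‖ := hA y
  have hTa2 : ‖y + A y‖ ^ 2 = ‖y‖ ^ 2 + 2 * t + (r * ‖y‖) ^ 2 := by
    rw [@norm_add_sq ℂ, hAy]
  have ha2 : ‖(a : H)‖ ^ 2 = ‖y‖ ^ 2 - 2 * t + (r * ‖y‖) ^ 2 := by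
    rw [hay, @norm_sub_sq ℂ, hAy]
  have hres : RCLike.re ⟪(s : H), (a : H)⟫ = ‖y‖ ^ 2 - (r * ‖y‖) ^ 2 := by
    rw [hre, hay]
    simp only [inner_add_left, inner_sub_right, map_sub, map_add]
    have h1 : RCLike.re ⟪A y, y⟫ = RCLike.re ⟪y, A y⟫ := inner_re_symm _ _
    have h2 : RCLike.re ⟪y, y⟫ = ‖y‖ ^ 2 := inner_self_eq_norm_sq y
    have h3 : RCLike.re ⟪A y, A y⟫ = ‖A y‖ ^ 2 := inner_self_eq_norm_sq (A y)
    rw [h1, h2, h3, hAy]; ring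
  -- pass to squares
  have hna : ‖Sop K A a - a‖ = ‖(s : H) - (a : H)‖ := by
    rw [← hs, ← Submodule.norm_coe (s - a)]
    norm_cast
  have hnb : ‖Sop K A a + a‖ = ‖(s : H) + (a : H)‖ := by
    rw [← hs, ← Submodule.norm_coe (s + a)]
    norm_cast
  rw [hna, hnb]
  have hss : ‖(s : H)‖ ^ 2 ≤ ‖y + A y‖ ^ 2 := by
    nlinarith [norm_nonneg (s : H), norm_nonneg (y + A y)]
  rw [hTa2] at hss
  have hr2 : (0 : ℝ) ≤ 1 - r ^ 2 := by nlinarith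
  have hsq : ‖(s : H) - (a : H)‖ ^ 2 ≤ (r * ‖(s : H) + (a : H)‖) ^ 2 := by
    rw [@norm_sub_sq ℂ, mul_pow, @norm_add_sq ℂ, hres, ha2]
    nlinarith [mul_nonneg hr2 (sub_nonneg.mpr hss)]
  have h2 : 0 ≤ r * ‖(s : H) + (a : H)‖ := mul_nonneg hr0 (norm_nonneg _)
  exact (pow_le_pow_iff_left₀ (norm_nonneg _) h2 (by norm_num)).mp hsq

/-- Lower bound for `Sop K A + 1`. -/
lemma lower_bound {A : H →L[ℂ] H} {r : ℝ} (hr0 : 0 ≤ r) (hr1 : r < 1)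
    (hA : ∀ x, ‖A x‖ = r * ‖x‖) (a : K) :
    2 * ‖a‖ ≤ (1 + r) * ‖(Sop K A + 1) a‖ := by
  have hk := key_ineq K hr0 hr1 hA a
  have h1 : (2 : ℂ) • a = (Sop K A a + a) - (Sop K A a - a) := by
    simp; module
  have h2 : (2 : ℝ) * ‖a‖ = ‖(Sop K A a + a) - (Sop K A a - a)‖ := by
    rw [← h1]
    simp [norm_smul]
  have h3 : ‖(Sop K A a + a) - (Sop K A a - a)‖ ≤ ‖Sop K A a + a‖ + ‖Sop K A a - a‖ :=
    norm_sub_le _ _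
  have h4 : (Sop K A + 1) a = Sop K A a + a := by simp
  rw [h4]
  nlinarith [norm_nonneg (Sop K A a + a)]

lemma adjoint_ringInv {A : H →L[ℂ] H} (hA : ‖A‖ < 1) :
    ContinuousLinearMap.adjoint (Ring.inverse (1 - A)) =
      Ring.inverse (1 - ContinuousLinearMap.adjoint A) := by
  have h1 := oneSub_mul_inv hA
  have h2 := inv_mul_oneSub hA
  have s1 : star ((1 - A) * Ring.inverse (1 - A)) = (1 : H →L[ℂ] H) := by rw [h1, star_one]
  have s2 : star (Ring.inverse (1 - A) * (1 - A)) = (1 : H →L[ℂ] H) := by rw [h2, star_one]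
  rw [star_mul, star_sub, star_one] at s1 s2
  have hstar : (star A : H →L[ℂ] H) = ContinuousLinearMap.adjoint A := rfl
  have hstarX : (star (Ring.inverse (1 - A)) : H →L[ℂ] H) =
      ContinuousLinearMap.adjoint (Ring.inverse (1 - A)) := rfl
  rw [hstar, hstarX] at s1 s2
  exact (ringInv_eq s2 s1).symm

lemma Sop_adjoint (A : H →L[ℂ] H) (hA : ‖A‖ < 1) :
    ContinuousLinearMap.adjoint (Sop K A) = Sop K (ContinuousLinearMap.adjoint A) := by
  have hA' : ‖ContinuousLinearMap.adjoint A‖ < 1 := by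
    rwa [ContinuousLinearMap.adjoint.norm_map]
  -- adjoint of the middle operator
  have hmid : ContinuousLinearMap.adjoint ((1 + A).comp (Ring.inverse (1 - A)))
      = (1 + ContinuousLinearMap.adjoint A).comp
          (Ring.inverse (1 - ContinuousLinearMap.adjoint A)) := by
    rw [adjoint_comp, adjoint_ringInv hA]
    have hone : ContinuousLinearMap.adjoint ((1 : H →L[ℂ] H) + A)
        = 1 + ContinuousLinearMap.adjoint A := by
      have : (star ((1 : H →L[ℂ] H) + A)) = 1 + star A := by rw [star_add, star_one]
      exact this
    rw [hone]
    -- commute `(1 + A†)` with the inverse of `(1 - A†)`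
    set Ad := ContinuousLinearMap.adjoint A
    set Xd : H →L[ℂ] H := Ring.inverse (1 - Ad)
    have h1 : (1 - Ad) * Xd = 1 := oneSub_mul_inv hA'
    have h2 : Xd * (1 - Ad) = 1 := inv_mul_oneSub hA'
    have hcomm : Xd * (1 + Ad) = (1 + Ad) * Xd := by
      have e1 : (1 + Ad) * (1 - Ad) = (1 - Ad) * (1 + Ad) := by noncomm_ring
      calc Xd * (1 + Ad) = Xd * (1 + Ad) * ((1 - Ad) * Xd) := by rw [h1, mul_one]
        _ = Xd * ((1 + Ad) * (1 - Ad)) * Xd := by noncomm_ring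
        _ = Xd * ((1 - Ad) * (1 + Ad)) * Xd := by rw [e1]
        _ = (Xd * (1 - Ad)) * ((1 + Ad) * Xd) := by noncomm_ring
        _ = (1 + Ad) * Xd := by rw [h2, one_mul]
    calc (Ring.inverse (1 - Ad)).comp (1 + Ad) = Xd * (1 + Ad) := rfl
      _ = (1 + Ad) * Xd := hcomm
      _ = (1 + Ad).comp (Ring.inverse (1 - Ad)) := rfl
  rw [Sop, adjoint_comp, adjoint_comp, Submodule.adjoint_subtypeL,
    Submodule.adjoint_orthogonalProjection, hmid, Sop]
  rfl

/-- `Sop K A + 1` is invertible. -/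
lemma Sop_invertible {A : H →L[ℂ] H} {r : ℝ} (hr0 : 0 ≤ r) (hr1 : r < 1)
    (hA : ∀ x, ‖A x‖ = r * ‖x‖)
    (hA' : ∀ x, ‖ContinuousLinearMap.adjoint A x‖ = r * ‖x‖) :
    ∃ g : K →L[ℂ] K, (Sop K A + 1) * g = 1 ∧ g * (Sop K A + 1) = 1 := by
  have hAn : ‖A‖ < 1 := norm_A_lt hr1 hr0 hA
  set f : K →L[ℂ] K := Sop K A + 1 with hf
  have hbnd : ∀ a : K, ‖a‖ ≤ ((1 : NNReal) : ℝ) * ‖f a‖ := by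
    intro a
    have h := lower_bound K hr0 hr1 hA a
    have h2 := norm_nonneg (f a)
    have : ((1 : NNReal) : ℝ) = 1 := by norm_num
    rw [this]
    nlinarith
  have hanti := f.antilipschitz_of_bound hbnd
  have hinj : LinearMap.ker (f : K →ₗ[ℂ] K) = ⊥ := by
    exact LinearMap.ker_eq_bot_of_injective hanti.injective
  have hclosed : IsClosed (Set.range f) := hanti.isClosed_range f.uniformContinuous
  have hrange : LinearMap.range (f : K →ₗ[ℂ] K) = ⊤ := by
    have hcr : IsClosed ((LinearMap.range (f : K →ₗ[ℂ] K) : Submodule ℂ K) : Set K) := by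
      simpa [LinearMap.coe_range] using hclosed
    haveI : CompleteSpace (LinearMap.range (f : K →ₗ[ℂ] K) : Submodule ℂ K) := hcr.completeSpace_coe
    rw [← Submodule.orthogonal_eq_bot_iff]
    rw [Submodule.eq_bot_iff]
    intro c hc
    have hfc : ∀ a : K, ⟪f a, c⟫ = 0 := fun a =>
      (Submodule.mem_orthogonal _ c).mp hc (f a) (LinearMap.mem_range_self _ a)
    have hadj : ∀ a : K, ⟪a, ContinuousLinearMap.adjoint f c⟫ = 0 := by
      intro a
      rw [adjoint_inner_right]
      exact hfc a
    have hfc0 : ContinuousLinearMap.adjoint f c = 0 := by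
      have := hadj (ContinuousLinearMap.adjoint f c)
      rwa [inner_self_eq_zero] at this
    have hfadj : ContinuousLinearMap.adjoint f
        = Sop K (ContinuousLinearMap.adjoint A) + 1 := by
      rw [hf, map_add, Sop_adjoint K A hAn]
      congr 1
      rw [ContinuousLinearMap.one_def, adjoint_id]
    have hlb := lower_bound K hr0 hr1 hA' c
    rw [← hfadj, hfc0] at hlb
    rw [norm_zero, mul_zero] at hlb
    have h0 := norm_nonneg c
    have hc0 : ‖c‖ = 0 := le_antisymm (by linarith) h0
    exact norm_eq_zero.mp hc0
  -- build the inverse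
  let e := ContinuousLinearEquiv.ofBijective f hinj hrange
  refine ⟨(e.symm : K →L[ℂ] K), ?_, ?_⟩
  · ext x
    have h : f (e.symm x) = x := e.apply_symm_apply x
    simp [ContinuousLinearMap.mul_apply, ContinuousLinearEquiv.coe_coe, h]
  · ext x
    have h : e.symm (f x) = x := e.symm_apply_apply x
    simp [ContinuousLinearMap.mul_apply, ContinuousLinearEquiv.coe_coe, h]

end Stmt19Aux

/-- de Branges' Lemma 2: For a unitary `U` on a Hilbert space `H` and a
closed subspace `C = K`, for each `w` in the open unit disk there is a unique bounded
operator `B(w)` on `K` with `‖B(w)‖ ≤ |w|` (so `I − B(w)` is invertible) such that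
`⟨(1+wU*)(1−wU*)⁻¹ a, c⟩ = ⟨(I+B(w))(I−B(w))⁻¹ a, c⟩` for all `a, c ∈ K`. -/
theorem stmt19 {H : Type*} [NormedAddCommGroup H] [InnerProductSpace ℂ H]
    [CompleteSpace H]
    (U : H →L[ℂ] H)
    (hU₁ : U ∘L ContinuousLinearMap.adjoint U = 1)
    (hU₂ : ContinuousLinearMap.adjoint U ∘L U = 1)
    (K : Submodule ℂ H) (hK : IsClosed (K : Set H)) :
    ∀ w : ℂ, ‖w‖ < 1 →
      ∃! B : K →L[ℂ] K, ‖B‖ ≤ ‖w‖ ∧ ∀ a c : K,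
        (inner ℂ
            (((1 + w • ContinuousLinearMap.adjoint U).comp
              (Ring.inverse (1 - w • ContinuousLinearMap.adjoint U))) (a : H))
            (c : H) : ℂ)
          = (inner ℂ (((1 + B).comp (Ring.inverse (1 - B))) a) c : ℂ) := by
  haveI : CompleteSpace K := hK.completeSpace_coe
  intro w hw
  set r : ℝ := ‖w‖ with hr
  have hr0 : 0 ≤ r := norm_nonneg w
  set A : H →L[ℂ] H := w • ContinuousLinearMap.adjoint U with hA
  -- `U` and `U†` are isometries
  have hUiso : ∀ x : H, ‖U x‖ = ‖x‖ := by
    intro x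
    have h1 : (inner ℂ (U x) (U x) : ℂ) = (inner ℂ x x : ℂ) := by
      rw [← adjoint_inner_left]
      have : ContinuousLinearMap.adjoint U (U x) = x := by
        have := congrArg (fun f : H →L[ℂ] H => f x) hU₂
        simpa using this
      rw [this]
    have h2 : ‖U x‖ ^ 2 = ‖x‖ ^ 2 := by
      rw [← inner_self_eq_norm_sq (𝕜 := ℂ), ← inner_self_eq_norm_sq (𝕜 := ℂ), h1]
    nlinarith [norm_nonneg (U x), norm_nonneg x]
  have hUaiso : ∀ x : H, ‖ContinuousLinearMap.adjoint U x‖ = ‖x‖ := by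
    intro x
    have h1 : (inner ℂ (ContinuousLinearMap.adjoint U x) (ContinuousLinearMap.adjoint U x) : ℂ)
        = (inner ℂ x x : ℂ) := by
      rw [adjoint_inner_left]
      have : U (ContinuousLinearMap.adjoint U x) = x := by
        have := congrArg (fun f : H →L[ℂ] H => f x) hU₁
        simpa using this
      rw [this]
    have h2 : ‖ContinuousLinearMap.adjoint U x‖ ^ 2 = ‖x‖ ^ 2 := by
      rw [← inner_self_eq_norm_sq (𝕜 := ℂ), ← inner_self_eq_norm_sq (𝕜 := ℂ), h1]
    nlinarith [norm_nonneg (ContinuousLinearMap.adjoint U x), norm_nonneg x]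
  have hAx : ∀ x : H, ‖A x‖ = r * ‖x‖ := by
    intro x
    have h : A x = w • (ContinuousLinearMap.adjoint U x) := rfl
    rw [h, norm_smul, hUaiso x, hr]
  have hAadj : ContinuousLinearMap.adjoint A = (starRingEnd ℂ w) • U := by
    rw [hA]
    rw [ContinuousLinearMap.adjoint.map_smulₛₗ]
    rw [adjoint_adjoint]
  have hAx' : ∀ x : H, ‖ContinuousLinearMap.adjoint A x‖ = r * ‖x‖ := by
    intro x
    rw [hAadj]
    have h : ((starRingEnd ℂ w) • U) x = (starRingEnd ℂ w) • (U x) := rfl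
    rw [h, norm_smul, hUiso x, RCLike.norm_conj, hr]
  have hAn : ‖A‖ < 1 := norm_A_lt (by rwa [hr] at hw) hr0 hAx
  obtain ⟨g, hfg, hgf⟩ := Sop_invertible K hr0 (by rwa [hr] at hw) hAx hAx'
  set f : K →L[ℂ] K := Sop K A + 1 with hf
  set B : K →L[ℂ] K := 1 - (2 : ℂ) • g with hB
  have honeB : (1 : K →L[ℂ] K) - B = (2 : ℂ) • g := by rw [hB]; module
  have hsmulmul : ∀ (c d : ℂ) (x y : K →L[ℂ] K), (c • x) * (d • y) = (c * d) • (x * y) := by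
    intro c d x y
    rw [ContinuousLinearMap.mul_def, ContinuousLinearMap.smul_comp,
      ContinuousLinearMap.comp_smul, smul_smul, mul_comm c d]
    rfl
  have hBinv : Ring.inverse ((1 : K →L[ℂ] K) - B) = (2⁻¹ : ℂ) • f := by
    rw [honeB]
    apply ringInv_eq
    · rw [hsmulmul]
      norm_num [hgf]
    · rw [hsmulmul]
      norm_num [hfg]
  have hcomp : ((1 : K →L[ℂ] K) + B).comp (Ring.inverse (1 - B)) = Sop K A := by
    rw [hBinv]
    have h1pB : (1 : K →L[ℂ] K) + B = (2 : ℂ) • (1 - g) := by rw [hB]; module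
    have : ((1 : K →L[ℂ] K) + B) * ((2⁻¹ : ℂ) • f) = Sop K A := by
      rw [h1pB, hsmulmul]
      norm_num
      have h5 : ((1 : K →L[ℂ] K) - g) * f = f - g * f := by
        rw [sub_mul, one_mul]
      rw [h5, hgf, hf]
      abel
    exact this
  -- inner product identity: compression
  have hinner : ∀ a c : K,
      (inner ℂ (((1 + A).comp (Ring.inverse (1 - A))) (a : H)) (c : H) : ℂ)
        = (inner ℂ (Sop K A a) c : ℂ) := by
    intro a c
    have h1 : Sop K A a
        = K.orthogonalProjection (((1 + A).comp (Ring.inverse (1 - A))) (a : H)) := rfl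
    rw [h1]
    exact (Submodule.inner_orthogonalProjection_eq_of_mem_right (K := K) c
      (((1 + A).comp (Ring.inverse (1 - A))) (a : H))).symm
  -- norm bound for B
  have hBnorm : ‖B‖ ≤ r := by
    apply opNorm_le_bound _ hr0
    intro a
    set b : K := g a with hb
    have hfb : f b = a := by
      have := congrArg (fun h : K →L[ℂ] K => h a) hfg
      simpa [ContinuousLinearMap.mul_apply, hb] using this
    have hBa : B a = Sop K A b - b := by
      rw [hB]
      simp only [ContinuousLinearMap.sub_apply, ContinuousLinearMap.smul_apply,
        ContinuousLinearMap.one_apply, ← hb]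
      have ha' : a = Sop K A b + b := by
        rw [← hfb, hf]; simp
      rw [ha']
      module
    rw [hBa]
    have hk := key_ineq K hr0 (by rwa [hr] at hw) hAx b
    have : Sop K A b + b = f b := by rw [hf]; simp
    rw [this, hfb] at hk
    exact hk
  refine ⟨B, ⟨hBnorm, ?_⟩, ?_⟩
  · intro a c
    rw [hinner a c, hcomp]
  · rintro B' ⟨hn', hcond'⟩
    have hB'lt : ‖B'‖ < 1 := lt_of_le_of_lt hn' hw
    have h1' : ((1 : K →L[ℂ] K) - B') * Ring.inverse (1 - B') = 1 :=
      oneSub_mul_inv hB'lt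
    have h2' : Ring.inverse ((1 : K →L[ℂ] K) - B') * (1 - B') = 1 :=
      inv_mul_oneSub hB'lt
    -- the defining condition forces the Cayley transform of B' to equal Sop K A
    have hG : ((1 : K →L[ℂ] K) + B').comp (Ring.inverse (1 - B')) = Sop K A := by
      refine ContinuousLinearMap.ext fun a => ?_
      refine ext_inner_right ℂ fun c => ?_
      rw [← hinner a c]
      exact (hcond' a c).symm
    -- hence `f = 2 • inverse (1 - B')`
    have hfeq : f = (2 : ℂ) • Ring.inverse ((1 : K →L[ℂ] K) - B') := by
      rw [hf, ← hG]
      have : ((1 : K →L[ℂ] K) + B').comp (Ring.inverse (1 - B'))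
          = ((1 : K →L[ℂ] K) + B') * Ring.inverse (1 - B') := rfl
      rw [this]
      have hsum : ((1 : K →L[ℂ] K) + B') * Ring.inverse (1 - B')
          + ((1 : K →L[ℂ] K) - B') * Ring.inverse (1 - B')
          = (2 : ℂ) • Ring.inverse ((1 : K →L[ℂ] K) - B') := by
        rw [← add_mul]
        have h6 : ((1 : K →L[ℂ] K) + B') + (1 - B') = (2 : ℂ) • (1 : K →L[ℂ] K) := by module
        rw [h6, ContinuousLinearMap.mul_def, ContinuousLinearMap.smul_comp, one_def, id_comp]
      rw [← hsum, h1']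
    -- then g = 2⁻¹ • (1 - B')
    have hg : g = (2⁻¹ : ℂ) • ((1 : K →L[ℂ] K) - B') := by
      have hfh : f * ((2⁻¹ : ℂ) • ((1 : K →L[ℂ] K) - B')) = 1 := by
        rw [hfeq, hsmulmul]
        norm_num [h2']
      calc g = g * (f * ((2⁻¹ : ℂ) • ((1 : K →L[ℂ] K) - B'))) := by rw [hfh, mul_one]
        _ = (g * f) * ((2⁻¹ : ℂ) • ((1 : K →L[ℂ] K) - B')) := by rw [mul_assoc]
        _ = (2⁻¹ : ℂ) • ((1 : K →L[ℂ] K) - B') := by rw [hgf, one_mul]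
    rw [hB, hg]
    module
end
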